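/- arXiv:1601.04313 — 7 statements merged into one kernel-verified Lean document; each statement's English description precedes it below -/
import Mathlib

section
/- Let L be a nonzero Lie subalgebra of W(A), F = R^L its field of constants, and FL the F-span of L inside Der_K(R). If L is abelian, then FL is abelian; if L is nilpotent, then FL is a nilpotent Lie algebra; if L is solvable, then FL is a solvable Lie algebra. -/
noncomputable section

/-- The field of constants of a set of `K`-derivations of a field `R`:
`{r ∈ R | D r = 0 for all D ∈ S}`. -/
def derivConstants (K R : Type*) [CommRing K] [Field R] [Algebra K R]
    (S : Set (Derivation K R R)) : Subfield R where
  carrier := {r : R | ∀ D ∈ S, D r = 0}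
  mul_mem' := by
    intro a b ha hb D hD
    rw [Derivation.leibniz]
    simp [ha D hD, hb D hD]
  one_mem' := by intro D _; simp
  add_mem' := by intro a b ha hb D hD; simp [ha D hD, hb D hD]
  zero_mem' := by intro D _; simp
  neg_mem' := by intro a ha D hD; simp [ha D hD]
  inv_mem' := by
    intro a ha D hD
    rcases eq_or_ne a 0 with h | h
    · simp [h]
    · have h1 : D (a * a⁻¹) = 0 := by rw [mul_inv_cancel₀ h]; simp
      rw [Derivation.leibniz, ha D hD] at h1
      simpa [h] using h1

/-- `W(A) = R · Der_K(A)` : the `R`-span, inside `Der_K(R)`, of the set of `K`-derivations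
of `R` that map the image of `A` into itself.  Here `R` is the fraction field of the
integral domain `A`. -/
def wAlg (K A R : Type*) [Field K] [CommRing A] [IsDomain A] [Algebra K A]
    [Field R] [Algebra A R] [IsFractionRing A R] [Algebra K R] [IsScalarTower K A R] :
    Submodule R (Derivation K R R) :=
  Submodule.span R
    {D : Derivation K R R | ∀ a : A, ∃ b : A, D (algebraMap A R a) = algebraMap A R b}


namespace Statement1Aux

variable {K R : Type*} [Field K] [Field R] [Algebra K R] (F : Subfield R)

theorem span_apply_eq_zero {S : Set (Derivation K R R)}
    (hS : ∀ a ∈ S, ∀ f : F, a (f : R) = 0) {x : Derivation K R R}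
    (hx : x ∈ Submodule.span F S) (f : F) : x (f : R) = 0 := by
  induction hx using Submodule.span_induction with
  | mem a ha => exact hS a ha f
  | zero => simp
  | add a b _ _ ha hb => simp [ha, hb]
  | smul g a _ ha => rw [Subfield.smul_def]; simp [ha]

theorem lie_smul_right (a y : Derivation K R R) (g : R) (hag : a g = 0) :
    ⁅a, g • y⁆ = g • ⁅a, y⁆ := by
  ext r
  simp only [Derivation.commutator_apply, Derivation.smul_apply, smul_eq_mul,
    Derivation.leibniz, hag, zero_mul, zero_add, smul_add]
  ring

theorem lie_smul_left (x b : Derivation K R R) (f : R) (hbf : b f = 0) :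
    ⁅f • x, b⁆ = f • ⁅x, b⁆ := by
  rw [← neg_neg ⁅f • x, b⁆, ← lie_skew, lie_smul_right b x f hbf, ← lie_skew, smul_neg, neg_neg]
  exact neg_neg _

theorem lie_mem_span {S T : Set (Derivation K R R)}
    (hS : ∀ a ∈ S, ∀ f : F, a (f : R) = 0) (hT : ∀ a ∈ T, ∀ f : F, a (f : R) = 0)
    {x y : Derivation K R R} (hx : x ∈ Submodule.span F S) (hy : y ∈ Submodule.span F T) :
    ⁅x, y⁆ ∈ Submodule.span F {z : Derivation K R R | ∃ a ∈ S, ∃ b ∈ T, ⁅a, b⁆ = z} := by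
  induction hx using Submodule.span_induction with
  | mem a ha =>
    induction hy using Submodule.span_induction with
    | mem b hb => exact Submodule.subset_span ⟨a, ha, b, hb, rfl⟩
    | zero => simp
    | add b c _ _ hb hc => rw [lie_add]; exact add_mem hb hc
    | smul g b _ hb =>
      rw [Subfield.smul_def, lie_smul_right a b (g : R) (hS a ha g), ← Subfield.smul_def]
      exact Submodule.smul_mem _ g hb
  | zero => simp
  | add a b _ _ ha hb => rw [add_lie]; exact add_mem ha hb
  | smul f a _ ha =>
    rw [Subfield.smul_def, lie_smul_left a y (f : R) (span_apply_eq_zero F hT hy f),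
      ← Subfield.smul_def]
    exact Submodule.smul_mem _ f ha

variable (K) in
/-- The `F`-span of `S`, as a `K`-submodule of the derivations. -/
def spanK (hK : ∀ k : K, algebraMap K R k ∈ F) (S : Set (Derivation K R R)) :
    Submodule K (Derivation K R R) where
  carrier := (Submodule.span F S : Set (Derivation K R R))
  add_mem' := by intro a b ha hb; exact add_mem ha hb
  zero_mem' := zero_mem _
  smul_mem' := by
    intro k x hx
    have h1 : k • x = (⟨algebraMap K R k, hK k⟩ : F) • x := by
      rw [Subfield.smul_def, algebraMap_smul]
    rw [h1]
    exact Submodule.smul_mem _ _ hx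

theorem lie_ideal_val_mem_span
    (hK : ∀ k : K, algebraMap K R k ∈ F)
    (M : LieSubalgebra K (Derivation K R R))
    (I J : LieIdeal K ↥M)
    {U V W : Set (Derivation K R R)}
    (hU : ∀ a ∈ U, ∀ f : F, a (f : R) = 0) (hV : ∀ a ∈ V, ∀ f : F, a (f : R) = 0)
    (hI : ∀ x ∈ I, (x : Derivation K R R) ∈ Submodule.span F U)
    (hJ : ∀ x ∈ J, (x : Derivation K R R) ∈ Submodule.span F V)
    (hW : {z : Derivation K R R | ∃ a ∈ U, ∃ b ∈ V, ⁅a, b⁆ = z} ⊆ W) :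
    ∀ x ∈ ⁅I, J⁆, (x : Derivation K R R) ∈ Submodule.span F W := by
  intro x hx
  rw [← LieSubmodule.mem_toSubmodule, LieSubmodule.lieIdeal_oper_eq_linear_span'] at hx
  have hle : Submodule.span K {m : ↥M | ∃ a ∈ I, ∃ n ∈ J, ⁅a, n⁆ = m} ≤
      Submodule.comap (M.toSubmodule.subtype) (spanK K F hK W) := by
    rw [Submodule.span_le]
    rintro m ⟨a, ha, n, hn, rfl⟩
    show ((⁅a, n⁆ : ↥M) : Derivation K R R) ∈ Submodule.span F W
    rw [LieSubalgebra.coe_bracket]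
    exact Submodule.span_mono hW (lie_mem_span F hU hV (hI a ha) (hJ n hn))
  exact hle hx

end Statement1Aux

/-- Let `L` be a nonzero Lie subalgebra of `W(A)`, `F = R^L` its field of
constants and `FL` the `F`-span of `L` inside `Der_K(R)`.  If `L` is abelian then `FL` is
abelian; if `L` is nilpotent then `FL` is a nilpotent Lie algebra; if `L` is solvable then
`FL` is a solvable Lie algebra. -/
theorem statement1
    (K A R : Type*) [Field K] [CharZero K] [CommRing A] [IsDomain A] [Algebra K A]
    [Field R] [Algebra A R] [IsFractionRing A R] [Algebra K R] [IsScalarTower K A R]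
    (L : LieSubalgebra K (Derivation K R R))
    (hLW : (L : Set (Derivation K R R)) ⊆ (wAlg K A R : Set (Derivation K R R)))
    (hL0 : L ≠ ⊥)
    (F : Subfield R) (hF : F = derivConstants K R (L : Set (Derivation K R R))) :
    (IsLieAbelian L →
      ∀ x ∈ Submodule.span F (L : Set (Derivation K R R)),
        ∀ y ∈ Submodule.span F (L : Set (Derivation K R R)), ⁅x, y⁆ = 0) ∧
    (LieModule.IsNilpotent L L →
      ∃ M : LieSubalgebra K (Derivation K R R),
        (M : Set (Derivation K R R)) =
          (Submodule.span F (L : Set (Derivation K R R)) : Set (Derivation K R R)) ∧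
        LieModule.IsNilpotent M M) ∧
    (LieAlgebra.IsSolvable L →
      ∃ M : LieSubalgebra K (Derivation K R R),
        (M : Set (Derivation K R R)) =
          (Submodule.span F (L : Set (Derivation K R R)) : Set (Derivation K R R)) ∧
        LieAlgebra.IsSolvable M) := by

  classical
  subst hF
  set F : Subfield R := derivConstants K R (L : Set (Derivation K R R)) with hF
  have hS : ∀ a ∈ (L : Set (Derivation K R R)), ∀ f : F, a (f : R) = 0 := by
    intro a ha f
    exact f.2 a ha
  have hK : ∀ k : K, algebraMap K R k ∈ F := by
    intro k
    exact fun D _ => by simp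
  have hlie : ∀ {x y : Derivation K R R}, x ∈ Submodule.span F (L : Set (Derivation K R R)) →
      y ∈ Submodule.span F (L : Set (Derivation K R R)) →
      ⁅x, y⁆ ∈ Submodule.span F (L : Set (Derivation K R R)) := by
    intro x y hx hy
    refine Submodule.span_le.mpr ?_ (Statement1Aux.lie_mem_span F hS hS hx hy)
    rintro z ⟨a, ha, b, hb, rfl⟩
    exact Submodule.subset_span (L.lie_mem ha hb)
  refine ⟨?_, ?_, ?_⟩
  · -- abelian case
    intro habl x hx y hy
    have h := Statement1Aux.lie_mem_span F hS hS hx hy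
    have hB : {z : Derivation K R R |
        ∃ a ∈ (L : Set (Derivation K R R)), ∃ b ∈ (L : Set (Derivation K R R)), ⁅a, b⁆ = z}
        ⊆ {(0 : Derivation K R R)} := by
      rintro z ⟨a, ha, b, hb, rfl⟩
      have h0 : (⁅(⟨a, ha⟩ : L), (⟨b, hb⟩ : L)⁆ : L) = 0 := trivial_lie_zero _ _ _ _
      show ⁅a, b⁆ ∈ ({0} : Set (Derivation K R R))
      rw [Set.mem_singleton_iff]
      have h1 : ((⁅(⟨a, ha⟩ : L), (⟨b, hb⟩ : L)⁆ : L) : Derivation K R R) = 0 := by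
        rw [h0]; rfl
      exact h1
    have h2 : Submodule.span F {z : Derivation K R R |
        ∃ a ∈ (L : Set (Derivation K R R)), ∃ b ∈ (L : Set (Derivation K R R)), ⁅a, b⁆ = z}
        ≤ ⊥ := by
      rw [← Submodule.span_zero_singleton (R := F)]
      exact Submodule.span_mono hB
    simpa using h2 h
  · -- nilpotent case
    intro hnil
    obtain ⟨n, hn⟩ := (LieModule.isNilpotent_iff K L L).mp hnil
    refine ⟨{ toSubmodule := Statement1Aux.spanK K F hK (L : Set (Derivation K R R))
              lie_mem' := fun {x y} hx hy => hlie hx hy }, rfl, ?_⟩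
    set M : LieSubalgebra K (Derivation K R R) :=
      { toSubmodule := Statement1Aux.spanK K F hK (L : Set (Derivation K R R))
        lie_mem' := fun {x y} hx hy => hlie hx hy } with hM
    have hMx : ∀ x : ↥M, (x : Derivation K R R) ∈ Submodule.span F (L : Set (Derivation K R R)) :=
      fun x => x.2
    have key : ∀ k, ∀ x ∈ LieModule.lowerCentralSeries K ↥M ↥M k,
        (x : Derivation K R R) ∈ Submodule.span F
          ((fun a : ↥L => (a : Derivation K R R)) ''
            ((LieModule.lowerCentralSeries K ↥L ↥L k : LieSubmodule K ↥L ↥L) : Set ↥L)) := by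
      intro k
      induction k with
      | zero =>
        intro x _
        have himg : ((fun a : ↥L => (a : Derivation K R R)) ''
            ((⊤ : LieSubmodule K ↥L ↥L) : Set ↥L)) = (L : Set (Derivation K R R)) := by
          ext z
          constructor
          · rintro ⟨a, -, rfl⟩
            exact a.2
          · intro hz
            exact ⟨⟨z, hz⟩, by simp, rfl⟩
        rw [LieModule.lowerCentralSeries_zero, himg]
        exact hMx x
      | succ k ih =>
        rw [LieModule.lowerCentralSeries_succ, LieModule.lowerCentralSeries_succ]
        refine Statement1Aux.lie_ideal_val_mem_span F hK M ⊤
          (LieModule.lowerCentralSeries K ↥M ↥M k) hS ?_ (fun x _ => hMx x) ih ?_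
        · rintro a ⟨a', _, rfl⟩ f
          exact hS _ a'.2 f
        · rintro z ⟨a, ha, b, ⟨b', hb', rfl⟩, rfl⟩
          exact ⟨⁅(⟨a, ha⟩ : ↥L), b'⁆,
            LieSubmodule.lie_mem_lie (LieSubmodule.mem_top _) hb', rfl⟩
    rw [LieModule.isNilpotent_iff K]
    refine ⟨n, ?_⟩
    rw [LieSubmodule.eq_bot_iff]
    intro m hm
    have h1 := key n m hm
    rw [hn, LieSubmodule.bot_coe, Set.image_singleton] at h1
    simp only [ZeroMemClass.coe_zero, Submodule.span_zero_singleton, Submodule.mem_bot] at h1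
    exact ZeroMemClass.coe_eq_zero.mp h1
  · -- solvable case
    intro hsol
    obtain ⟨n, hn⟩ := (LieAlgebra.isSolvable_iff K L).mp hsol
    refine ⟨{ toSubmodule := Statement1Aux.spanK K F hK (L : Set (Derivation K R R))
              lie_mem' := fun {x y} hx hy => hlie hx hy }, rfl, ?_⟩
    set M : LieSubalgebra K (Derivation K R R) :=
      { toSubmodule := Statement1Aux.spanK K F hK (L : Set (Derivation K R R))
        lie_mem' := fun {x y} hx hy => hlie hx hy } with hM
    have hMx : ∀ x : ↥M, (x : Derivation K R R) ∈ Submodule.span F (L : Set (Derivation K R R)) :=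
      fun x => x.2
    have key : ∀ k, ∀ x ∈ LieAlgebra.derivedSeries K ↥M k,
        (x : Derivation K R R) ∈ Submodule.span F
          ((fun a : ↥L => (a : Derivation K R R)) ''
            ((LieAlgebra.derivedSeries K ↥L k : LieSubmodule K ↥L ↥L) : Set ↥L)) := by
      intro k
      induction k with
      | zero =>
        intro x _
        have himg : ((fun a : ↥L => (a : Derivation K R R)) ''
            ((⊤ : LieSubmodule K ↥L ↥L) : Set ↥L)) = (L : Set (Derivation K R R)) := by
          ext z
          constructor
          · rintro ⟨a, -, rfl⟩
            exact a.2
          · intro hz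
            exact ⟨⟨z, hz⟩, by simp, rfl⟩
        rw [LieAlgebra.derivedSeries_def, LieAlgebra.derivedSeriesOfIdeal_zero, himg]
        exact hMx x
      | succ k ih =>
        rw [LieAlgebra.derivedSeries_def, LieAlgebra.derivedSeriesOfIdeal_succ,
          LieAlgebra.derivedSeries_def, LieAlgebra.derivedSeriesOfIdeal_succ]
        have hTk : ∀ a ∈ ((fun a : ↥L => (a : Derivation K R R)) ''
            ((LieAlgebra.derivedSeries K ↥L k : LieSubmodule K ↥L ↥L) : Set ↥L)),
            ∀ f : F, a (f : R) = 0 := by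
          rintro a ⟨a', _, rfl⟩ f
          exact hS _ a'.2 f
        refine Statement1Aux.lie_ideal_val_mem_span F hK M
          (LieAlgebra.derivedSeries K ↥M k) (LieAlgebra.derivedSeries K ↥M k)
          hTk hTk ih ih ?_
        rintro z ⟨a, ⟨a', ha', rfl⟩, b, ⟨b', hb', rfl⟩, rfl⟩
        exact ⟨⁅a', b'⁆, LieSubmodule.lie_mem_lie ha' hb', rfl⟩
    rw [LieAlgebra.isSolvable_iff K]
    refine ⟨n, ?_⟩
    rw [LieSubmodule.eq_bot_iff]
    intro m hm
    have h1 := key n m hm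
    rw [hn, LieSubmodule.bot_coe, Set.image_singleton] at h1
    simp only [ZeroMemClass.coe_zero, Submodule.span_zero_singleton, Submodule.mem_bot] at h1
    exact ZeroMemClass.coe_eq_zero.mp h1
end
end

section
/- Let L be a Lie subalgebra of W(A) of finite rank over R, let Z = Z(L) be the center of L, and F = R^L the field of constants of L. Then rk_R(Z) = dim_F(FZ), and FZ (the F-span of Z) is contained in the center Z(FL) of the Lie algebra FL. -/
noncomputable section

lemma deriv_sum_apply' {K R : Type*} [CommRing K] [CommRing R] [Algebra K R]
    {ι : Type*} (s : Finset ι) (f : ι → Derivation K R R) (a : R) :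
    (∑ i ∈ s, f i) a = ∑ i ∈ s, f i a := by
  induction s using Finset.cons_induction <;> simp [*]

set_option maxHeartbeats 1000000
set_option synthInstance.maxHeartbeats 400000

/-- Let `L` be a Lie subalgebra of `W(A)` of finite rank over `R`, `Z = Z(L)`
the center of `L` and `F = R^L` the field of constants.  Then `rk_R(Z) = dim_F(FZ)`, and the
`F`-span `FZ` of `Z` is contained in the center of the Lie algebra `FL`. -/
theorem statement2
    (K A R : Type*) [Field K] [CharZero K] [CommRing A] [IsDomain A] [Algebra K A]
    [Field R] [Algebra A R] [IsFractionRing A R] [Algebra K R] [IsScalarTower K A R]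
    (L : LieSubalgebra K (Derivation K R R))
    (hLW : (L : Set (Derivation K R R)) ⊆ (wAlg K A R : Set (Derivation K R R)))
    (hfin : Module.Finite R (Submodule.span R (L : Set (Derivation K R R))))
    (F : Subfield R) (hF : F = derivConstants K R (L : Set (Derivation K R R)))
    (Z : Set (Derivation K R R))
    (hZ : Z = {x : Derivation K R R | x ∈ L ∧ ∀ y ∈ L, ⁅x, y⁆ = 0}) :
    Module.rank R (Submodule.span R Z) = Module.rank F (Submodule.span F Z) ∧
    Submodule.span F Z ≤ Submodule.span F (L : Set (Derivation K R R)) ∧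
    (∀ x ∈ Submodule.span F Z,
      ∀ y ∈ Submodule.span F (L : Set (Derivation K R R)), ⁅x, y⁆ = 0) := by
  classical
  have hFdef : ∀ f : R, f ∈ F ↔ ∀ D ∈ (L : Set (Derivation K R R)), D f = 0 := by
    subst hF; exact fun f => Iff.rfl
  have hZdef : ∀ x, x ∈ Z ↔ x ∈ L ∧ ∀ y ∈ L, ⁅x, y⁆ = 0 := by
    subst hZ; exact fun x => Iff.rfl
  have hcomm : ∀ x ∈ Submodule.span F Z,
      ∀ y ∈ Submodule.span F (L : Set (Derivation K R R)), ⁅x, y⁆ = 0 := by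
      -- every y in span F L kills F
      have hkill : ∀ y ∈ Submodule.span F (L : Set (Derivation K R R)), ∀ f ∈ F, y f = 0 := by
        intro y hy
        induction hy using Submodule.span_induction with
        | mem y hy => exact fun f hf => (hFdef f).mp hf y hy
        | zero => simp
        | add y₁ y₂ _ _ h1 h2 => intro f hf; rw [Derivation.add_apply, h1 f hf, h2 f hf, add_zero]
        | smul c y _ h => intro f hf; rw [Derivation.smul_apply, h f hf, smul_zero]
      intro x hx
      induction hx using Submodule.span_induction with
      | mem x hxZ =>
        intro y hy
        induction hy using Submodule.span_induction with
        | mem y hyL => exact ((hZdef x).mp hxZ).2 y hyL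
        | zero => exact lie_zero x
        | add y₁ y₂ _ _ h1 h2 => rw [lie_add, h1, h2, add_zero]
        | smul c y hy h =>
          ext a
          have hxc : x (c : R) = 0 := (hFdef _).mp c.2 x ((hZdef x).mp hxZ).1
          have h0 : x (y a) - y (x a) = 0 := by
            have := congrArg (fun D : Derivation K R R => D a) h
            simpa [Derivation.commutator_apply] using this
          have hc : ∀ r : R, c • r = (c : R) * r := fun r => rfl
          simp only [Derivation.commutator_apply, Derivation.smul_apply, Derivation.zero_apply,
            hc, Derivation.leibniz, smul_eq_mul, hxc, mul_zero, zero_mul, add_zero, zero_add]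
          linear_combination (c : R) * h0
      | zero => intro y hy; exact zero_lie y
      | add x₁ x₂ _ _ h1 h2 => intro y hy; rw [add_lie, h1 y hy, h2 y hy, add_zero]
      | smul c x hx h =>
        intro y hy
        ext a
        have hyc : y (c : R) = 0 := hkill y hy _ c.2
        have h0 : x (y a) - y (x a) = 0 := by
          have := congrArg (fun D : Derivation K R R => D a) (h y hy)
          simpa [Derivation.commutator_apply] using this
        have hc : ∀ r : R, c • r = (c : R) * r := fun r => rfl
        simp only [Derivation.commutator_apply, Derivation.smul_apply, Derivation.zero_apply,
          hc, Derivation.leibniz, smul_eq_mul, hyc, mul_zero, zero_mul, add_zero, zero_add]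
        linear_combination (c : R) * h0
  refine ⟨?_, Submodule.span_mono (fun x hx => ((hZdef x).mp hx).1), hcomm⟩
  classical
  set W := Submodule.span F Z with hW
  set b := Module.Basis.ofVectorSpace F W with hb
  set v : Module.Basis.ofVectorSpaceIndex F W → Derivation K R R :=
    fun i => (b i : Derivation K R R) with hv
  have hFsmul : ∀ (c : F) (D : Derivation K R R), c • D = (c : R) • D := by
    intro c D; ext a; rw [Derivation.smul_apply, Derivation.smul_apply]; rfl
  have hvW : ∀ i, v i ∈ W := fun i => (b i).2
  have hFli : LinearIndependent F v :=
    b.linearIndependent.map' W.subtype (Submodule.ker_subtype W)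
  have hvcomm : ∀ i, ∀ E ∈ L, ∀ a : R, E (v i a) = v i (E a) := by
    intro i E hE a
    have h1 := hcomm (v i) (hvW i) E (Submodule.subset_span hE)
    have h2 := congrArg (fun D : Derivation K R R => D a) h1
    simp only [Derivation.commutator_apply, Derivation.zero_apply] at h2
    exact (sub_eq_zero.mp h2).symm
  have hRli : LinearIndependent R v := by
    rw [linearIndependent_iff']
    intro s
    induction s using Finset.strongInduction with
    | _ s ih =>
      intro g hg j hj
      by_contra hgj
      set g' : (Module.Basis.ofVectorSpaceIndex F W) → R := fun i => (g j)⁻¹ * g i with hg'def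
      have hrel : ∑ i ∈ s, g' i • v i = 0 := by
        calc ∑ i ∈ s, g' i • v i = (g j)⁻¹ • ∑ i ∈ s, g i • v i := by
              rw [Finset.smul_sum]
              exact Finset.sum_congr rfl fun i _ => (mul_smul _ _ _)
          _ = 0 := by rw [hg, smul_zero]
      have hg'j : g' j = 1 := inv_mul_cancel₀ hgj
      have happ : ∀ a : R, ∑ i ∈ s, g' i * v i a = 0 := by
        intro a
        have := congrArg (fun D : Derivation K R R => D a) hrel
        simpa [deriv_sum_apply', Derivation.smul_apply, smul_eq_mul] using this
      have hFall : ∀ i ∈ s, g' i ∈ F := by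
        intro i hi
        refine (hFdef _).mpr ?_
        intro E hE
        have hpt : ∀ a : R, ∑ k ∈ s, E (g' k) * v k a = 0 := by
          intro a
          have h1 : E (∑ k ∈ s, g' k * v k a) = 0 := by rw [happ a]; simp
          rw [map_sum] at h1
          have h3 : ∀ k ∈ s, E (g' k * v k a) = E (g' k) * v k a + g' k * v k (E a) := by
            intro k _
            rw [Derivation.leibniz, smul_eq_mul, smul_eq_mul, hvcomm k E hE a]; ring
          rw [Finset.sum_congr rfl h3, Finset.sum_add_distrib, happ (E a), add_zero] at h1
          exact h1
        have hEj : E (g' j) = 0 := by rw [hg'j]; simp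
        have hrel2 : ∑ k ∈ s.erase j, E (g' k) • v k = 0 := by
          ext a
          rw [deriv_sum_apply']
          simp only [Derivation.smul_apply, smul_eq_mul, Derivation.zero_apply]
          rw [Finset.sum_erase s (by rw [hEj, zero_mul])]
          exact hpt a
        have hall := ih (s.erase j) (Finset.erase_ssubset hj) (fun k => E (g' k)) hrel2
        by_cases hij : i = j
        · rw [hij, hg'j]; simp
        · exact hall i (Finset.mem_erase.mpr ⟨hij, hi⟩)
      set c : (Module.Basis.ofVectorSpaceIndex F W) → F :=
        fun i => if h : i ∈ s then (⟨g' i, hFall i h⟩ : F) else 0 with hcdef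
      have hFrel : ∑ i ∈ s, c i • v i = 0 := by
        have heq : ∑ i ∈ s, c i • v i = ∑ i ∈ s, g' i • v i :=
          Finset.sum_congr rfl (fun i hi => by
            simp only [hcdef, dif_pos hi, hFsmul])
        rw [heq]; exact hrel
      have := linearIndependent_iff'.mp hFli s c hFrel j hj
      rw [hcdef] at this
      simp only [dif_pos hj] at this
      have h0 : g' j = (0 : R) := congrArg Subtype.val this
      rw [hg'j] at h0
      exact one_ne_zero h0
  -- span F (range v) = W
  have hWv : Submodule.span F (Set.range v) = W := by
    have hcomp : (⇑W.subtype ∘ ⇑b) = v := funext fun i => rfl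
    have h := congrArg (Submodule.map W.subtype) b.span_eq
    rwa [Submodule.map_span, ← Set.range_comp, hcomp, Submodule.map_top,
      Submodule.range_subtype] at h
  have hFR : ∀ x, x ∈ W → x ∈ Submodule.span R Z := by
    intro x hx
    induction hx using Submodule.span_induction with
    | mem x hx => exact Submodule.subset_span hx
    | zero => exact Submodule.zero_mem _
    | add a b _ _ h1 h2 => exact Submodule.add_mem _ h1 h2
    | smul c x _ h => rw [hFsmul]; exact Submodule.smul_mem _ _ h
  have hFRv : ∀ x, x ∈ Submodule.span F (Set.range v) →
      x ∈ Submodule.span R (Set.range v) := by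
    intro x hx
    induction hx using Submodule.span_induction with
    | mem x hx => exact Submodule.subset_span hx
    | zero => exact Submodule.zero_mem _
    | add a b _ _ h1 h2 => exact Submodule.add_mem _ h1 h2
    | smul c x _ h => rw [hFsmul]; exact Submodule.smul_mem _ _ h
  have hspan : Submodule.span R (Set.range v) = Submodule.span R Z := by
    apply le_antisymm
    · rw [Submodule.span_le]; rintro _ ⟨i, rfl⟩; exact hFR _ (hvW i)
    · rw [Submodule.span_le]
      intro z hz
      refine hFRv z ?_
      rw [hWv]
      exact Submodule.subset_span hz
  rw [← hspan, rank_span hRli, Cardinal.mk_range_eq v hRli.injective]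
  exact b.mk_eq_rank''
end
end

section
/- Let L be an abelian Lie subalgebra of W(A) of finite rank over R and F = R^L its field of constants. Then FL is an abelian Lie subalgebra of W(A) and rk_R(L) = dim_F(FL). -/
noncomputable section

private theorem lie_smul_deriv {K R : Type*} [CommRing K] [CommRing R] [Algebra K R]
    (D E : Derivation K R R) (r : R) : ⁅D, r • E⁆ = r • ⁅D, E⁆ + D r • E := by
  ext a
  simp only [Derivation.commutator_apply, Derivation.add_apply, Derivation.smul_apply,
    smul_eq_mul, Derivation.leibniz]
  ring

/-- Let `L` be an abelian Lie subalgebra of `W(A)` of finite rank over `R`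
and `F = R^L` its field of constants.  Then `FL` is an abelian Lie subalgebra of `W(A)` and
`rk_R(L) = dim_F(FL)`. -/
theorem statement3
    (K A R : Type*) [Field K] [CharZero K] [CommRing A] [IsDomain A] [Algebra K A]
    [Field R] [Algebra A R] [IsFractionRing A R] [Algebra K R] [IsScalarTower K A R]
    (L : LieSubalgebra K (Derivation K R R))
    (hLW : (L : Set (Derivation K R R)) ⊆ (wAlg K A R : Set (Derivation K R R)))
    (habelian : IsLieAbelian L)
    (hfin : Module.Finite R (Submodule.span R (L : Set (Derivation K R R))))
    (F : Subfield R) (hF : F = derivConstants K R (L : Set (Derivation K R R))) :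
    (∀ x ∈ Submodule.span F (L : Set (Derivation K R R)),
      ∀ y ∈ Submodule.span F (L : Set (Derivation K R R)), ⁅x, y⁆ = 0) ∧
    ((Submodule.span F (L : Set (Derivation K R R)) : Set (Derivation K R R)) ⊆
      (wAlg K A R : Set (Derivation K R R))) ∧
    Module.rank R (Submodule.span R (L : Set (Derivation K R R))) =
      Module.rank F (Submodule.span F (L : Set (Derivation K R R))) := by

  subst hF
  set S : Set (Derivation K R R) := (L : Set (Derivation K R R)) with hS
  set F : Subfield R := derivConstants K R S with hFdef
  -- elements of L commute
  have hcomm : ∀ x ∈ S, ∀ y ∈ S, ⁅x, y⁆ = (0 : Derivation K R R) := by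
    intro x hx y hy
    have h : (⁅(⟨x, hx⟩ : L), (⟨y, hy⟩ : L)⁆ : L) = 0 := trivial_lie_zero _ _ _ _
    have h2 : ((⁅(⟨x, hx⟩ : L), (⟨y, hy⟩ : L)⁆ : L) : Derivation K R R)
        = ((0 : L) : Derivation K R R) := congrArg _ h
    rw [LieSubalgebra.coe_bracket, ZeroMemClass.coe_zero] at h2
    exact h2
  -- membership in F means killed by all of L
  have hFmem : ∀ r : R, r ∈ F ↔ ∀ D ∈ S, D r = 0 := fun r => Iff.rfl
  -- (a) elements of span F S kill elements of F
  have hkill : ∀ x ∈ Submodule.span F S, ∀ r : R, r ∈ F → x r = 0 := by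
    intro x hx
    induction hx using Submodule.span_induction with
    | mem D hD => intro r hr; exact (hFmem r).mp hr D hD
    | zero => intro r _; simp
    | add u v _ _ hu hv => intro r hr; simp [hu r hr, hv r hr]
    | smul s u _ hu =>
        intro r hr
        have : (s • u : Derivation K R R) = (s : R) • u := rfl
        rw [this]
        simp [hu r hr]
  -- (b) elements of span F S commute with elements of S
  have hcommL : ∀ x ∈ Submodule.span F S, ∀ D ∈ S, ⁅x, D⁆ = (0 : Derivation K R R) := by
    intro x hx
    induction hx using Submodule.span_induction with
    | mem E hE => intro D hD; exact hcomm E hE D hD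
    | zero => intro D _; simp
    | add u v _ _ hu hv => intro D hD; rw [add_lie, hu D hD, hv D hD, add_zero]
    | smul s u _ hu =>
        intro D hD
        have h1 : (s • u : Derivation K R R) = (s : R) • u := rfl
        have h2 : ⁅D, (s : R) • u⁆ = (s : R) • ⁅D, u⁆ + D (s : R) • u := lie_smul_deriv D u _
        have h3 : D (s : R) = 0 := s.2 D hD
        have h4 : ⁅u, D⁆ = 0 := hu D hD
        have h5 : ⁅D, u⁆ = 0 := by rw [← lie_skew, h4, neg_zero]
        rw [h1, ← lie_skew, h2, h3, h5]
        simp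
  -- Part 1
  have part1 : ∀ x ∈ Submodule.span F S, ∀ y ∈ Submodule.span F S,
      ⁅x, y⁆ = (0 : Derivation K R R) := by
    intro x hx y hy
    induction hy using Submodule.span_induction with
    | mem D hD => exact hcommL x hx D hD
    | zero => simp
    | add u v _ _ hu hv => rw [lie_add, hu, hv, add_zero]
    | smul s u _ hu =>
        have h1 : (s • u : Derivation K R R) = (s : R) • u := rfl
        rw [h1, lie_smul_deriv, hu, hkill x hx (s : R) s.2]
        simp
  -- Part 2
  have part2 : (Submodule.span F S : Set (Derivation K R R)) ⊆
      (wAlg K A R : Set (Derivation K R R)) := by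
    intro x hx
    have hle : Submodule.span F S ≤ (wAlg K A R).restrictScalars F :=
      Submodule.span_le.mpr hLW
    exact hle hx
  refine ⟨part1, part2, ?_⟩
  -- Part 3
  obtain ⟨t, htS, hspan, hli⟩ := exists_linearIndependent R S
  have key : S ⊆ (Submodule.span F t : Set (Derivation K R R)) := by
    intro E hE
    have hE' : E ∈ Submodule.span R t := by
      rw [hspan]; exact Submodule.subset_span hE
    obtain ⟨c, hc, hsum⟩ := Submodule.mem_span_set.mp hE'
    have hcF : ∀ m, c m ∈ F := by
      intro m
      rw [hFmem]
      intro D hD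
      -- expand the bracket
      have hexp : (0 : Derivation K R R) = c.sum fun m r => D r • m := by
        calc (0 : Derivation K R R) = ⁅D, E⁆ := (hcomm D hD E hE).symm
          _ = ⁅D, c.sum fun m r => r • m⁆ := by rw [hsum]
          _ = ⁅D, ∑ m ∈ c.support, c m • m⁆ := by rw [Finsupp.sum]
          _ = ∑ m ∈ c.support, ⁅D, c m • m⁆ :=
              map_sum (AddMonoidHom.mk' (fun E' : Derivation K R R => ⁅D, E'⁆)
                (lie_add D)) _ _
          _ = c.sum fun m r => D r • m := by
              rw [Finsupp.sum]
              refine Finset.sum_congr rfl fun m hm => ?_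
              have hm' : ⁅D, m⁆ = 0 := hcomm D hD m (htS (hc hm))
              rw [lie_smul_deriv, hm']
              simp
      have hl : Finsupp.linearCombination R id
          (c.mapRange (fun r => D r) (map_zero D)) = 0 := by
        rw [Finsupp.linearCombination_apply,
          Finsupp.sum_mapRange_index (fun a => by simp)]
        simpa using hexp.symm
      have hmem : c.mapRange (fun r => D r) (map_zero D) ∈ Finsupp.supported R R t := by
        rw [Finsupp.mem_supported]
        exact Set.Subset.trans (Finset.coe_subset.mpr Finsupp.support_mapRange) hc
      have hl0 := (linearIndepOn_iff (v := id) (s := t)).mp (linearIndependent_subtype_iff.mp hli) _ hmem hl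
      have := DFunLike.congr_fun hl0 m
      simpa [Finsupp.mapRange_apply] using this
    rw [← hsum, Finsupp.sum]
    refine Submodule.sum_mem _ fun m hm => ?_
    have hmm : (c m) • m = ((⟨c m, hcF m⟩ : F) • m : Derivation K R R) := rfl
    rw [hmm]
    exact Submodule.smul_mem _ _ (Submodule.subset_span (hc hm))
  have hspanF : Submodule.span F S = Submodule.span F t :=
    le_antisymm (Submodule.span_le.mpr key) (Submodule.span_mono htS)
  have hinj : Function.Injective fun r : F => r • (1 : R) := by
    intro a b h
    simp only at h
    rw [Subring.smul_def, Subring.smul_def] at h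
    exact Subtype.ext (by simpa using h)
  have hliF : LinearIndependent F (fun x : ↥t => (x : Derivation K R R)) :=
    LinearIndependent.restrict_scalars hinj hli
  rw [← hspan, hspanF, rank_span_set hli, rank_span_set hliF]
end
end

section
/- Let L be a nilpotent Lie subalgebra of W(A) with rk_R(L) = 1 and F = R^L its field of constants. Then L is abelian and dim_F(FL) = 1. -/
noncomputable section

private lemma deriv_bracket_smul {K R : Type*} [CommRing K] [Field R] [Algebra K R]
    (E₀ : Derivation K R R) (a b : R) :
    ⁅a • E₀, b • E₀⁆ = (a * E₀ b - b * E₀ a) • E₀ := by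
  ext x
  simp only [Derivation.commutator_apply, Derivation.coe_smul, Pi.smul_apply, smul_eq_mul,
    Derivation.leibniz]
  ring

set_option maxHeartbeats 1000000 in
set_option synthInstance.maxHeartbeats 200000 in
/-- Let `L` be a nilpotent Lie subalgebra of `W(A)` with `rk_R(L) = 1` and
`F = R^L` its field of constants.  Then `L` is abelian and `dim_F(FL) = 1`. -/
theorem statement6
    (K A R : Type*) [Field K] [CharZero K] [CommRing A] [IsDomain A] [Algebra K A]
    [Field R] [Algebra A R] [IsFractionRing A R] [Algebra K R] [IsScalarTower K A R]
    (L : LieSubalgebra K (Derivation K R R))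
    (hLW : (L : Set (Derivation K R R)) ⊆ (wAlg K A R : Set (Derivation K R R)))
    (hnil : LieRing.IsNilpotent L)
    (hrk : Module.rank R (Submodule.span R (L : Set (Derivation K R R))) = 1)
    (F : Subfield R) (hF : F = derivConstants K R (L : Set (Derivation K R R))) :
    IsLieAbelian L ∧
    Module.rank F (Submodule.span F (L : Set (Derivation K R R))) = 1 := by
  classical
  haveI := hnil
  haveI : Module.Free R (Submodule.span R (L : Set (Derivation K R R))) :=
    Module.Free.of_divisionRing R _
  haveI : Module.Free F (Submodule.span F (L : Set (Derivation K R R))) :=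
    Module.Free.of_divisionRing F _
  obtain ⟨v₀, hv₀mem, hv₀ne, hle⟩ := (rank_submodule_eq_one_iff _).1 hrk
  -- a nonzero element of L
  have hLne : ∃ D ∈ L, D ≠ (0 : Derivation K R R) := by
    by_contra h
    push_neg at h
    have hsub : (L : Set (Derivation K R R)) ⊆ ((⊥ : Submodule R (Derivation K R R)) : Set _) := by
      intro D hD; simpa using h D hD
    have := Submodule.span_le.2 hsub
    exact hv₀ne (by simpa using this hv₀mem)
  obtain ⟨E₀, hE₀L, hE₀ne⟩ := hLne
  -- every element of L is an R-multiple of E₀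
  have hmul : ∀ E ∈ L, ∃ r : R, E = r • E₀ := by
    intro E hE
    have hEs : E ∈ Submodule.span R {v₀} := hle (Submodule.subset_span hE)
    have h0s : E₀ ∈ Submodule.span R {v₀} := hle (Submodule.subset_span hE₀L)
    rw [Submodule.mem_span_singleton] at hEs h0s
    obtain ⟨r, hr⟩ := hEs; obtain ⟨s, hs⟩ := h0s
    have hs0 : s ≠ 0 := by rintro rfl; rw [zero_smul] at hs; exact hE₀ne hs.symm
    exact ⟨r / s, by rw [← hr, ← hs, smul_smul, div_mul_cancel₀ _ hs0]⟩
  have hpow : ∀ w : R, E₀ w = 0 → ∀ j : ℕ, E₀ (w ^ j) = 0 := by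
    intro w hw j
    induction j with
    | zero => simp
    | succ j ih => rw [pow_succ, Derivation.leibniz, ih, hw]; simp
  -- key: all the coefficients are constants of E₀
  have key : ∀ E ∈ L, ∀ r : R, E = r • E₀ → E₀ r = 0 := by
    intro E hE r hEr
    by_contra hr0
    set e₀ : L := ⟨E₀, hE₀L⟩ with he₀
    set e : L := ⟨E, hE⟩ with he
    have iter : ∀ n : ℕ, (((LieModule.toEnd K L L e₀) ^ n) e : Derivation K R R)
        = (⇑E₀)^[n] r • E₀ := by
      intro n
      induction n with
      | zero => simpa using hEr
      | succ n ih =>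
        rw [pow_succ', Module.End.mul_apply]
        have hco : ((LieModule.toEnd K L L e₀) (((LieModule.toEnd K L L e₀) ^ n) e)
            : Derivation K R R)
            = ⁅E₀, ((((LieModule.toEnd K L L e₀) ^ n) e : L) : Derivation K R R)⁆ := by
          rw [LieModule.toEnd_apply_apply]; rfl
        rw [hco, ih]
        have h1 : (E₀ : Derivation K R R) = (1 : R) • E₀ := (one_smul R E₀).symm
        calc ⁅(E₀ : Derivation K R R), (⇑E₀)^[n] r • E₀⁆
            = ⁅(1 : R) • E₀, (⇑E₀)^[n] r • E₀⁆ := by rw [← h1]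
          _ = ((1 : R) * E₀ ((⇑E₀)^[n] r) - (⇑E₀)^[n] r * E₀ 1) • E₀ :=
              deriv_bracket_smul E₀ 1 ((⇑E₀)^[n] r)
          _ = (⇑E₀)^[n+1] r • E₀ := by
              rw [Function.iterate_succ_apply']
              simp
    obtain ⟨N, hN⟩ := LieModule.isNilpotent_toEnd_of_isNilpotent K L L e₀
    have hPN : (⇑E₀)^[N] r = 0 := by
      have h0 := iter N
      rw [hN] at h0
      simp only [LinearMap.zero_apply, ZeroMemClass.coe_zero] at h0
      rcases smul_eq_zero.mp h0.symm with h | h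
      · exact h
      · exact absurd h hE₀ne
    have hex : ∃ k, (⇑E₀)^[k] r = 0 := ⟨N, hPN⟩
    set m := Nat.find hex with hm
    have hm_spec : (⇑E₀)^[m] r = 0 := Nat.find_spec hex
    have hr_ne : r ≠ 0 := fun h => hr0 (by simp [h])
    have hm2 : 2 ≤ m := by
      rw [hm, Nat.le_find_iff]
      intro k hk
      interval_cases k
      · simpa using hr_ne
      · simpa using hr0
    set u := (⇑E₀)^[m-1] r with hu_def
    set v := (⇑E₀)^[m-2] r with hv_def
    have hu : u ≠ 0 := Nat.find_min hex (by omega)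
    have hEu : E₀ u = 0 := by
      have h2 := Function.iterate_succ_apply' (⇑E₀) (m - 1) r
      have h1 : m - 1 + 1 = m := by omega
      rw [Nat.succ_eq_add_one, h1] at h2
      rw [hu_def, ← h2]
      exact hm_spec
    have hEv : E₀ v = u := by
      have h2 := Function.iterate_succ_apply' (⇑E₀) (m - 2) r
      have h1 : m - 2 + 1 = m - 1 := by omega
      rw [Nat.succ_eq_add_one, h1] at h2
      rw [hv_def, hu_def, ← h2]
    obtain ⟨uE, huEc⟩ : ∃ x : L, (x : Derivation K R R) = u • E₀ :=
      ⟨((LieModule.toEnd K L L e₀) ^ (m-1)) e, iter (m-1)⟩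
    obtain ⟨vE, hvEc⟩ : ∃ x : L, (x : Derivation K R R) = v • E₀ :=
      ⟨((LieModule.toEnd K L L e₀) ^ (m-2)) e, iter (m-2)⟩
    have iter2 : ∀ k : ℕ, (((LieModule.toEnd K L L vE) ^ k) uE : Derivation K R R)
        = (u * (-u) ^ k) • E₀ := by
      intro k
      induction k with
      | zero => simpa using huEc
      | succ k ih =>
        rw [pow_succ', Module.End.mul_apply]
        have hco : ((LieModule.toEnd K L L vE) (((LieModule.toEnd K L L vE) ^ k) uE)
            : Derivation K R R)
            = ⁅(vE : Derivation K R R), ((((LieModule.toEnd K L L vE) ^ k) uE : L)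
              : Derivation K R R)⁆ := by
          rw [LieModule.toEnd_apply_apply]; rfl
        rw [hco, ih, hvEc, deriv_bracket_smul]
        have h1 : E₀ (u * (-u) ^ k) = 0 := by
          rw [Derivation.leibniz, hpow (-u) (by simp [hEu]) k, hEu]
          simp
        rw [h1, hEv]
        congr 1
        ring
    obtain ⟨N2, hN2⟩ := LieModule.isNilpotent_toEnd_of_isNilpotent K L L vE
    have h0 := iter2 N2
    rw [hN2] at h0
    simp only [LinearMap.zero_apply, ZeroMemClass.coe_zero] at h0
    rcases smul_eq_zero.mp h0.symm with h | h
    · rcases mul_eq_zero.mp h with h' | h'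
      · exact hu h'
      · exact hu (by simpa using (pow_eq_zero_iff'.mp h').1)
    · exact hE₀ne h
  -- coefficients lie in F
  have hconst : ∀ E ∈ L, ∀ r : R, E = r • E₀ → r ∈ F := by
    intro E hE r hEr
    rw [hF]
    intro D hD
    obtain ⟨s, hs⟩ := hmul D hD
    rw [hs]
    simp [key E hE r hEr]
  constructor
  · refine ⟨fun x y => ?_⟩
    apply Subtype.ext
    rw [LieSubalgebra.coe_bracket]
    obtain ⟨rx, hrx⟩ := hmul (x : Derivation K R R) x.2
    obtain ⟨ry, hry⟩ := hmul (y : Derivation K R R) y.2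
    rw [hrx, hry, deriv_bracket_smul, key _ y.2 ry hry, key _ x.2 rx hrx]
    simp only [mul_zero, sub_self, zero_smul, ZeroMemClass.coe_zero]
  · rw [rank_submodule_eq_one_iff]
    refine ⟨E₀, Submodule.subset_span hE₀L, hE₀ne, ?_⟩
    rw [Submodule.span_le]
    intro E hE
    obtain ⟨r, hr⟩ := hmul E hE
    have hrF : r ∈ F := hconst E hE r hr
    have : E ∈ Submodule.span F {E₀} := by
      rw [Submodule.mem_span_singleton]
      exact ⟨⟨r, hrF⟩, hr.symm⟩
    exact this
end
end

section
/- Let D₁, D₂, D₃ ∈ W(A) and a ∈ R be such that D₁(a) = D₂(a) = 0 and D₃(a) = 1, and let F = R^{D₁} ∩ R^{D₂} ∩ R^{D₃} be the common field of constants. If b ∈ R satisfies D₁(b) = D₂(b) = 0 and D₃(b) lies in the F-span of {1, a, a²/2!, …, aˢ/s!} for some integer s ≥ 0, then b lies in the F-span of {1, a, a²/2!, …, a^{s+1}/(s+1)!}. -/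
noncomputable section

/-- Let `D₁, D₂, D₃ ∈ W(A)` and `a ∈ R` with `D₁(a) = D₂(a) = 0`,
`D₃(a) = 1`, and let `F = R^{D₁} ∩ R^{D₂} ∩ R^{D₃}`.  If `b ∈ R` satisfies
`D₁(b) = D₂(b) = 0` and `D₃(b) ∈ F⟨1, a, …, aˢ/s!⟩` for some `s ≥ 0`, then
`b ∈ F⟨1, a, …, a^{s+1}/(s+1)!⟩`. -/
theorem statement8
    (K A R : Type*) [Field K] [CharZero K] [CommRing A] [IsDomain A] [Algebra K A]
    [Field R] [Algebra A R] [IsFractionRing A R] [Algebra K R] [IsScalarTower K A R]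
    (D₁ D₂ D₃ : Derivation K R R)
    (hD₁ : D₁ ∈ wAlg K A R) (hD₂ : D₂ ∈ wAlg K A R) (hD₃ : D₃ ∈ wAlg K A R)
    (a : R) (ha₁ : D₁ a = 0) (ha₂ : D₂ a = 0) (ha₃ : D₃ a = 1)
    (F : Subfield R) (hF : F = derivConstants K R {D₁, D₂, D₃})
    (b : R) (s : ℕ) (hb₁ : D₁ b = 0) (hb₂ : D₂ b = 0)
    (hb₃ : D₃ b ∈ Submodule.span F {x : R | ∃ i ≤ s, x = a ^ i / (Nat.factorial i : R)}) :
    b ∈ Submodule.span F {x : R | ∃ i ≤ s + 1, x = a ^ i / (Nat.factorial i : R)} := by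
  have : CharZero R := charZero_of_injective_algebraMap (algebraMap K R).injective
  have hfac : ∀ i : ℕ, ((i.factorial : R)) ≠ 0 := fun i =>
    Nat.cast_ne_zero.mpr i.factorial_ne_zero
  have hDfac : ∀ (D : Derivation K R R) (i : ℕ), D ((i.factorial : R)) = 0 := by
    intro D i; exact D.map_natCast _
  -- derivatives of the basic elements
  have key₃ : ∀ i : ℕ, D₃ (a ^ (i + 1) / ((i + 1).factorial : R)) = a ^ i / (i.factorial : R) := by
    intro i
    rw [Derivation.leibniz_div_const _ _ _ (hDfac D₃ _), Derivation.leibniz_pow, ha₃]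
    simp only [smul_eq_mul, nsmul_eq_mul, Nat.add_sub_cancel, mul_one, Nat.factorial_succ,
      Nat.cast_mul, Nat.cast_add, Nat.cast_one, mul_inv]
    have h1 : ((i : R) + 1) ≠ 0 := Nat.cast_add_one_ne_zero i
    rw [div_eq_mul_inv,
      show ((i : R) + 1)⁻¹ * ((i.factorial : R))⁻¹ * (((i : R) + 1) * a ^ i) =
        (((i : R) + 1)⁻¹ * ((i : R) + 1)) * (a ^ i * ((i.factorial : R))⁻¹) from by ring,
      inv_mul_cancel₀ h1, one_mul]
  have key0 : ∀ (D : Derivation K R R), D a = 0 →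
      ∀ i : ℕ, D (a ^ i / (i.factorial : R)) = 0 := by
    intro D hDa i
    rw [Derivation.leibniz_div_const _ _ _ (hDfac D _), Derivation.leibniz_pow, hDa]
    simp
  -- constants of F
  have hFc : ∀ c : R, c ∈ F → D₁ c = 0 ∧ D₂ c = 0 ∧ D₃ c = 0 := by
    intro c hc
    rw [hF] at hc
    exact ⟨hc D₁ (by simp), hc D₂ (by simp), hc D₃ (by simp)⟩
  -- decompose D₃ b
  rw [Submodule.mem_span_set'] at hb₃
  obtain ⟨n, f, g, hg⟩ := hb₃
  choose j hjle hje using fun i => (g i).2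
  set b' : R := ∑ i, (f i : R) * (a ^ (j i + 1) / (((j i + 1).factorial : R))) with hb'
  have hDval : ∀ (D : Derivation K R R), (∀ i, D ((f i : R)) = 0) → D b' =
      ∑ i, (f i : R) * D (a ^ (j i + 1) / (((j i + 1).factorial : R))) := by
    intro D hDf
    rw [hb', map_sum]
    refine Finset.sum_congr rfl fun i _ => ?_
    rw [Derivation.leibniz, hDf i]
    simp
  have hD₁b' : D₁ b' = 0 := by
    rw [hDval D₁ fun i => (hFc (f i) (f i).2).1]
    refine Finset.sum_eq_zero fun i _ => ?_
    rw [key0 D₁ ha₁]; ring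
  have hD₂b' : D₂ b' = 0 := by
    rw [hDval D₂ fun i => (hFc (f i) (f i).2).2.1]
    refine Finset.sum_eq_zero fun i _ => ?_
    rw [key0 D₂ ha₂]; ring
  have hD₃b' : D₃ b' = D₃ b := by
    rw [hDval D₃ fun i => (hFc (f i) (f i).2).2.2, ← hg]
    refine Finset.sum_congr rfl fun i _ => ?_
    rw [key₃, ← hje i]
    rfl
  -- b - b' is a constant
  have hc : b - b' ∈ F := by
    rw [hF]
    intro D hD
    rcases hD with h | h | h
    · subst h; rw [map_sub, hb₁, hD₁b', sub_zero]
    · subst h; rw [map_sub, hb₂, hD₂b', sub_zero]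
    · subst h; rw [map_sub, hD₃b', sub_self]
  -- conclude
  have hbb : b = (b - b') * 1 + b' := by ring
  rw [hbb]
  refine Submodule.add_mem _ ?_ ?_
  · have h1 : (1 : R) ∈ {x : R | ∃ i ≤ s + 1, x = a ^ i / (Nat.factorial i : R)} :=
      ⟨0, Nat.zero_le _, by simp⟩
    have := Submodule.smul_mem (Submodule.span F {x : R | ∃ i ≤ s + 1,
      x = a ^ i / (Nat.factorial i : R)}) (⟨b - b', hc⟩ : F) (Submodule.subset_span h1)
    rw [Subring.smul_def] at this; simpa using this
  · refine Submodule.sum_mem _ fun i _ => ?_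
    have hm : a ^ (j i + 1) / (((j i + 1).factorial : R)) ∈
        {x : R | ∃ k ≤ s + 1, x = a ^ k / (Nat.factorial k : R)} :=
      ⟨j i + 1, Nat.succ_le_succ (hjle i), rfl⟩
    have := Submodule.smul_mem (Submodule.span F {x : R | ∃ k ≤ s + 1,
      x = a ^ k / (Nat.factorial k : R)}) (f i) (Submodule.subset_span hm)
    rw [Subring.smul_def] at this; simpa using this
end
end

section
/- Let D₁, D₂, D₃ ∈ W(A) and a, b ∈ R be such that D₁(a) = D₁(b) = 0, D₂(a) = 1, D₂(b) = 0, D₃(a) = 0, D₃(b) = 1, and let F = R^{D₁} ∩ R^{D₂} ∩ R^{D₃} be the common field of constants. Let m ≥ 1 and k ≥ 1 be integers. If c ∈ R satisfies D₁(c) = 0, [D₂, D₃](c) = 0, D₂(c) lies in the F-span of {aⁱbʲ/(i!·j!) : 0 ≤ i ≤ m−1, 0 ≤ j ≤ k}, and D₃(c) lies in the F-span of {aⁱbʲ/(i!·j!) : 0 ≤ i ≤ m, 0 ≤ j ≤ k−1}, then c lies in the F-span of {aⁱbʲ/(i!·j!) : 0 ≤ i ≤ m, 0 ≤ j ≤ k}.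 -/
noncomputable section

open Finset

section AuxSt9
variable {K R : Type*} [Field K] [Field R] [Algebra K R]



lemma iterD_zero (D : Derivation K R R) (p : ℕ) : D^[p] (0:R) = 0 :=
  Function.iterate_fixed (map_zero D) p

lemma D_inv_const (D : Derivation K R R) {w : R} (hw : D w = 0) : D w⁻¹ = 0 := by
  rw [Derivation.leibniz_inv, hw]; simp

lemma D_const_mul (D : Derivation K R R) {w : R} (hw : D w = 0) (y : R) :
    D (w * y) = w * D y := by
  rw [Derivation.leibniz, hw]; simp [smul_eq_mul]

lemma iterD_const_mul (D : Derivation K R R) {w : R} (hw : D w = 0) (y : R) (p : ℕ) :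
    D^[p] (w * y) = w * D^[p] y := by
  induction p generalizing y with
  | zero => simp
  | succ p ih => rw [Function.iterate_succ_apply, Function.iterate_succ_apply,
      D_const_mul D hw y, ih]

lemma D_neg_one_pow (D : Derivation K R R) (s : ℕ) : D ((-1:R)^s) = 0 := by
  rcases neg_one_pow_eq_or R s with h | h <;> rw [h] <;> simp

lemma D_pow_fact_const (D : Derivation K R R) {u : R} (hu : D u = 0) (s : ℕ) :
    D (u ^ s / (Nat.factorial s : R)) = 0 := by
  rw [div_eq_mul_inv, Derivation.leibniz,
    D_inv_const D (D.map_natCast (Nat.factorial s)), Derivation.leibniz_pow, hu]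
  simp

lemma D_pow_fact_succ [CharZero R] (D : Derivation K R R) {u : R} (hu : D u = 1) (s : ℕ) :
    D (u ^ (s+1) / (Nat.factorial (s+1) : R)) = u ^ s / (Nat.factorial s : R) := by
  rw [div_eq_mul_inv, Derivation.leibniz,
    D_inv_const D (D.map_natCast (Nat.factorial (s+1))), Derivation.leibniz_pow, hu]
  have h1 : (Nat.factorial (s+1) : R) ≠ 0 := Nat.cast_ne_zero.mpr (Nat.factorial_ne_zero _)
  have h2 : (Nat.factorial s : R) ≠ 0 := Nat.cast_ne_zero.mpr (Nat.factorial_ne_zero _)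
  have h3 : (Nat.factorial (s+1) : R) = (s+1) * (Nat.factorial s : R) := by
    rw [Nat.factorial_succ]; push_cast; ring
  simp only [smul_eq_mul, smul_zero, mul_zero, add_zero, Nat.add_sub_cancel, nsmul_eq_mul,
    mul_one]
  have h4 : ((s:R)+1) ≠ 0 := Nat.cast_add_one_ne_zero s
  rw [h3, mul_inv]
  field_simp
  push_cast; ring


lemma tele [CharZero R] (D : Derivation K R R) {u : R} (hu : D u = 1) (n : ℕ) (y : ℕ → R)
    (hy : ∀ p, p ≤ n → D (y p) = y (p+1)) (h0 : y (n+1) = 0) :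
    D (∑ s ∈ range (n+1), (-1:R)^s * (u^s / (Nat.factorial s : R)) * y s) = 0 := by
  have hD_inv : ∀ q : ℕ, D ((Nat.factorial q : R))⁻¹ = 0 := by
    intro q
    rw [Derivation.leibniz_inv, D.map_natCast]; simp
  set t : ℕ → R := fun s => (-1:R)^s * (u^s / (Nat.factorial s : R)) * y (s+1) with ht
  set f : ℕ → R := fun s => Nat.casesOn s 0 (fun s' => t s') with hf
  rw [map_sum]
  have hterm : ∀ s ∈ range (n+1),
      D ((-1:R)^s * (u^s / (Nat.factorial s : R)) * y s) = f (s+1) - f s := by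
    intro s hs
    have hsle : s ≤ n := by simpa using Nat.lt_succ_iff.mp (mem_range.mp hs)
    have hpw : D ((-1:R)^s) = 0 := by
      rcases neg_one_pow_eq_or R s with h | h <;> rw [h] <;> simp
    have hdiv : D (u^s / (Nat.factorial s : R)) =
        (if s = 0 then 0 else u^(s-1) / (Nat.factorial (s-1) : R)) := by
      cases s with
      | zero => simp
      | succ s' =>
        have h1 : (Nat.factorial (s'+1) : R) ≠ 0 := Nat.cast_ne_zero.mpr (Nat.factorial_ne_zero _)
        have h2 : (Nat.factorial s' : R) ≠ 0 := Nat.cast_ne_zero.mpr (Nat.factorial_ne_zero _)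
        have h3 : (Nat.factorial (s'+1) : R) = ((s':R)+1) * (Nat.factorial s' : R) := by
          rw [Nat.factorial_succ]; push_cast; ring
        have h4 : ((s':R)+1) ≠ 0 := Nat.cast_add_one_ne_zero s'
        rw [div_eq_mul_inv, Derivation.leibniz, hD_inv, Derivation.leibniz_pow, hu]
        simp only [smul_eq_mul, smul_zero, mul_zero, add_zero, Nat.add_sub_cancel,
          nsmul_eq_mul, mul_one, if_neg (Nat.succ_ne_zero s')]
        rw [h3, mul_inv]
        push_cast
        field_simp
        ring
    rw [Derivation.leibniz, Derivation.leibniz, hpw, hdiv, hy s hsle]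
    simp only [smul_eq_mul, mul_zero, add_zero]
    cases s with
    | zero => simp [hf, ht]
    | succ s' =>
      simp only [if_neg (Nat.succ_ne_zero s'), hf, ht, Nat.succ_sub_one]
      have : (-1:R)^(s'+1) = -(-1:R)^s' := by rw [pow_succ]; ring
      rw [this]
      ring
  rw [Finset.sum_congr rfl hterm, Finset.sum_range_sub f (n+1)]
  simp [hf, ht, h0]

end AuxSt9


lemma alt_sum {R : Type*} [Field R] [CharZero R] {p : ℕ} (hp : p ≠ 0) :
    ∑ i ∈ range (p+1), (-1:R)^(p-i) * (p.choose i : R) = 0 := by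
  have h := Finset.sum_range_reflect (fun i => (-1:R)^(p-i) * (p.choose i : R)) (p+1)
  simp only [Nat.add_sub_cancel] at h
  have h2 : ∀ j ∈ range (p+1),
      (-1:R)^(p-(p-j)) * (p.choose (p-j) : R) = (-1:R)^j * (p.choose j : R) := by
    intro j hj
    have hj' : j ≤ p := Nat.lt_succ_iff.mp (mem_range.mp hj)
    rw [Nat.sub_sub_self hj', Nat.choose_symm hj']
  rw [Finset.sum_congr rfl h2] at h
  rw [← h]
  have := Int.alternating_sum_range_choose (n := p)
  rw [if_neg hp] at this
  calc ∑ j ∈ range (p+1), (-1:R)^j * (p.choose j : R)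
      = ((∑ j ∈ range (p+1), (-1:ℤ)^j * (p.choose j : ℤ) : ℤ) : R) := by push_cast; ring
    _ = 0 := by rw [this]; simp

lemma taylor_eq {R : Type*} [Field R] [CharZero R] (u : R) (n : ℕ) (y : ℕ → R)
    (hv : ∀ p, n < p → y p = 0) :
    ∑ i ∈ range (n+1), (u^i / (Nat.factorial i : R)) *
      (∑ s ∈ range (n+1), (-1:R)^s * (u^s / (Nat.factorial s : R)) * y (i+s)) = y 0 := by
  set T : ℕ → ℕ → R := fun i s =>
    (u^i / (Nat.factorial i : R)) * ((-1:R)^s * (u^s / (Nat.factorial s : R)) * y (i+s)) with hT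
  have step0 : ∑ i ∈ range (n+1), (u^i / (Nat.factorial i : R)) *
      (∑ s ∈ range (n+1), (-1:R)^s * (u^s / (Nat.factorial s : R)) * y (i+s))
      = ∑ i ∈ range (n+1), ∑ s ∈ range (n+1), T i s := by
    refine Finset.sum_congr rfl fun i _ => ?_
    rw [Finset.mul_sum]
  have step1 : ∀ i ∈ range (n+1),
      ∑ s ∈ range (n+1), T i s = ∑ s ∈ range (n+1-i), T i s := by
    intro i hi
    refine (Finset.sum_subset (Finset.range_subset_range.2 (by omega)) fun s hs hs' => ?_).symm
    have : n < i + s := by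
      simp only [mem_range] at hs hs'; omega
    simp [hT, hv _ this]
  have step2 : ∑ i ∈ range (n+1), ∑ s ∈ range (n+1-i), T i s
      = ∑ p ∈ range (n+1), ∑ i ∈ range (p+1), T i (p-i) := by
    rw [Finset.sum_sigma', Finset.sum_sigma']
    refine Finset.sum_nbij' (fun x => ⟨x.1 + x.2, x.1⟩) (fun x => ⟨x.2, x.1 - x.2⟩) ?_ ?_ ?_ ?_ ?_
    · rintro ⟨i, s⟩ hx
      simp only [Finset.mem_sigma, mem_range] at hx ⊢
      omega
    · rintro ⟨p, i⟩ hx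
      simp only [Finset.mem_sigma, mem_range] at hx ⊢
      omega
    · rintro ⟨i, s⟩ hx
      simp [Nat.add_sub_cancel_left]
    · rintro ⟨p, i⟩ hx
      simp only [Finset.mem_sigma, mem_range] at hx
      have h1 : i + (p - i) = p := by omega
      simp [h1]
    · rintro ⟨i, s⟩ hx
      simp only [Nat.add_sub_cancel_left]
  have step3 : ∀ p ∈ range (n+1), ∑ i ∈ range (p+1), T i (p-i)
      = if p = 0 then y 0 else 0 := by
    intro p _
    have hterm : ∀ i ∈ range (p+1), T i (p-i)
        = ((-1:R)^(p-i) * (p.choose i : R)) * ((u^p / (Nat.factorial p : R)) * y p) := by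
      intro i hi
      have hip : i ≤ p := Nat.lt_succ_iff.mp (mem_range.mp hi)
      have h1 : i + (p - i) = p := by omega
      have hkey : ((p.choose i : R)) * (Nat.factorial i : R) * (Nat.factorial (p-i) : R)
          = (Nat.factorial p : R) := by
        exact_mod_cast congrArg (Nat.cast : ℕ → R)
          (Nat.choose_mul_factorial_mul_factorial hip)
      have hif : (Nat.factorial i : R) ≠ 0 := Nat.cast_ne_zero.mpr (Nat.factorial_ne_zero _)
      have hpf : (Nat.factorial (p-i) : R) ≠ 0 := Nat.cast_ne_zero.mpr (Nat.factorial_ne_zero _)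
      have hf : (Nat.factorial p : R) ≠ 0 := Nat.cast_ne_zero.mpr (Nat.factorial_ne_zero _)
      have hpow : u^i * u^(p-i) = u^p := by rw [← pow_add, h1]
      simp only [hT, h1]
      field_simp
      rw [← hkey, ← hpow]
      ring
    rw [Finset.sum_congr rfl hterm, ← Finset.sum_mul]
    rcases eq_or_ne p 0 with rfl | hp
    · simp
    · rw [alt_sum hp, zero_mul, if_neg hp]
  rw [step0, Finset.sum_congr rfl step1, step2, Finset.sum_congr rfl step3]
  simp

def genM {R : Type*} [Field R] (a b : R) (i j : ℕ) : R :=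
  a ^ i * b ^ j / ((Nat.factorial i : R) * (Nat.factorial j : R))

section GenM
variable {K R : Type*} [Field K] [Field R] [Algebra K R]

lemma genM_eq (a b : R) (i j : ℕ) :
    genM a b i j = (a ^ i / (Nat.factorial i : R)) * (b ^ j / (Nat.factorial j : R)) :=
  (div_mul_div_comm _ _ _ _).symm

lemma genM_comm (a b : R) (i j : ℕ) : genM a b i j = genM b a j i := by
  unfold genM; ring

lemma D_genM_a [CharZero R] (D : Derivation K R R) {a b : R} (ha : D a = 1) (hb : D b = 0)
    (i j : ℕ) : D (genM a b (i+1) j) = genM a b i j := by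
  rw [genM_eq, genM_eq, Derivation.leibniz, D_pow_fact_const D hb, D_pow_fact_succ D ha]
  simp only [smul_eq_mul, smul_zero, mul_zero, zero_add]
  ring

lemma D_genM_a0 (D : Derivation K R R) {a b : R} (hb : D b = 0) (j : ℕ) :
    D (genM a b 0 j) = 0 := by
  rw [genM_eq]
  simp [D_pow_fact_const D hb j]

lemma D_genM_const (D : Derivation K R R) {a b : R} (ha : D a = 0) (hb : D b = 0) (i j : ℕ) :
    D (genM a b i j) = 0 := by
  rw [genM_eq, Derivation.leibniz, D_pow_fact_const D ha, D_pow_fact_const D hb]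
  simp

end GenM

/-- Let `D₁, D₂, D₃ ∈ W(A)` and `a, b ∈ R` with `D₁(a) = D₁(b) = 0`,
`D₂(a) = 1`, `D₂(b) = 0`, `D₃(a) = 0`, `D₃(b) = 1`, and let
`F = R^{D₁} ∩ R^{D₂} ∩ R^{D₃}`.  Let `m, k ≥ 1`.  If `c ∈ R` satisfies `D₁(c) = 0`,
`[D₂, D₃](c) = 0`, `D₂(c) ∈ F⟨aⁱbʲ/(i!·j!) : i ≤ m−1, j ≤ k⟩` and
`D₃(c) ∈ F⟨aⁱbʲ/(i!·j!) : i ≤ m, j ≤ k−1⟩`, then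
`c ∈ F⟨aⁱbʲ/(i!·j!) : i ≤ m, j ≤ k⟩`. -/
theorem statement9
    (K A R : Type*) [Field K] [CharZero K] [CommRing A] [IsDomain A] [Algebra K A]
    [Field R] [Algebra A R] [IsFractionRing A R] [Algebra K R] [IsScalarTower K A R]
    (D₁ D₂ D₃ : Derivation K R R)
    (hD₁ : D₁ ∈ wAlg K A R) (hD₂ : D₂ ∈ wAlg K A R) (hD₃ : D₃ ∈ wAlg K A R)
    (a b : R)
    (ha₁ : D₁ a = 0) (hb₁ : D₁ b = 0)
    (ha₂ : D₂ a = 1) (hb₂ : D₂ b = 0)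
    (ha₃ : D₃ a = 0) (hb₃ : D₃ b = 1)
    (F : Subfield R) (hF : F = derivConstants K R {D₁, D₂, D₃})
    (m k : ℕ) (hm : 1 ≤ m) (hk : 1 ≤ k)
    (c : R) (hc₁ : D₁ c = 0) (hc₂₃ : ⁅D₂, D₃⁆ c = 0)
    (hc₂ : D₂ c ∈ Submodule.span F
      {x : R | ∃ i ≤ m - 1, ∃ j ≤ k,
        x = a ^ i * b ^ j / ((Nat.factorial i : R) * (Nat.factorial j : R))})
    (hc₃ : D₃ c ∈ Submodule.span F
      {x : R | ∃ i ≤ m, ∃ j ≤ k - 1,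
        x = a ^ i * b ^ j / ((Nat.factorial i : R) * (Nat.factorial j : R))}) :
    c ∈ Submodule.span F
      {x : R | ∃ i ≤ m, ∃ j ≤ k,
        x = a ^ i * b ^ j / ((Nat.factorial i : R) * (Nat.factorial j : R))} := by
  haveI : CharZero R := charZero_of_injective_algebraMap (algebraMap K R).injective
  -- facts about F
  have hF1 : ∀ r : R, r ∈ F → D₁ r = 0 := by
    intro r hr; rw [hF] at hr; exact hr D₁ (by simp)
  have hF2 : ∀ r : R, r ∈ F → D₂ r = 0 := by
    intro r hr; rw [hF] at hr; exact hr D₂ (by simp)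
  have hF3 : ∀ r : R, r ∈ F → D₃ r = 0 := by
    intro r hr; rw [hF] at hr; exact hr D₃ (by simp)
  have hFbr : ∀ r : R, r ∈ F → (⁅D₂, D₃⁆ : Derivation K R R) r = 0 := by
    intro r hr
    rw [Derivation.commutator_apply, hF2 r hr, hF3 r hr, map_zero, map_zero, sub_zero]
  -- closure of spans under derivations vanishing on F
  have key : ∀ (D : Derivation K R R), (∀ r : R, r ∈ F → D r = 0) →
      ∀ (S' : Set R) (T : Submodule F R), (∀ x ∈ S', D x ∈ T) →
      ∀ x ∈ Submodule.span F S', D x ∈ T := by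
    intro D hDF S' T hgen x hx
    induction hx using Submodule.span_induction with
    | mem x h => exact hgen x h
    | zero => rw [map_zero]; exact T.zero_mem
    | add x y _ _ hx hy => rw [map_add]; exact T.add_mem hx hy
    | smul α x _ hx =>
        have hsm : D (α • x) = α • D x := by
          show D ((α : R) * x) = (α : R) * D x
          rw [Derivation.leibniz, hDF _ α.2]
          simp [smul_eq_mul]
        rw [hsm]; exact T.smul_mem α hx
  -- graded generating sets
  set SA : ℕ → Set R := fun r => {x : R | ∃ i ≤ r, ∃ j, x = genM a b i j} with hSA
  set SB : ℕ → Set R := fun s => {x : R | ∃ i, ∃ j ≤ s, x = genM a b i j} with hSB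
  have hSA_D2 : ∀ r : ℕ, ∀ x ∈ SA (r+1), D₂ x ∈ Submodule.span F (SA r) := by
    rintro r x ⟨i, hi, j, rfl⟩
    cases i with
    | zero => rw [D_genM_a0 D₂ hb₂]; exact Submodule.zero_mem _
    | succ i' =>
        rw [D_genM_a D₂ ha₂ hb₂]
        exact Submodule.subset_span ⟨i', by omega, j, rfl⟩
  have hSA0_D2 : ∀ x ∈ SA 0, D₂ x = 0 := by
    rintro x ⟨i, hi, j, rfl⟩
    obtain rfl : i = 0 := by omega
    exact D_genM_a0 D₂ hb₂ j
  have hSA_D3 : ∀ r : ℕ, ∀ x ∈ SA r, D₃ x ∈ Submodule.span F (SA r) := by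
    rintro r x ⟨i, hi, j, rfl⟩
    cases j with
    | zero =>
        rw [genM_comm, D_genM_a0 D₃ ha₃]; exact Submodule.zero_mem _
    | succ j' =>
        have : D₃ (genM a b i (j'+1)) = genM a b i j' := by
          rw [genM_comm a b, genM_comm a b i j']
          exact D_genM_a D₃ hb₃ ha₃ j' i
        rw [this]
        exact Submodule.subset_span ⟨i, hi, j', rfl⟩
  have hSB_D3 : ∀ s : ℕ, ∀ x ∈ SB (s+1), D₃ x ∈ Submodule.span F (SB s) := by
    rintro s x ⟨i, j, hj, rfl⟩
    cases j with
    | zero => rw [genM_comm, D_genM_a0 D₃ ha₃]; exact Submodule.zero_mem _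
    | succ j' =>
        have : D₃ (genM a b i (j'+1)) = genM a b i j' := by
          rw [genM_comm a b, genM_comm a b i j']
          exact D_genM_a D₃ hb₃ ha₃ j' i
        rw [this]
        exact Submodule.subset_span ⟨i, j', by omega, rfl⟩
  have hSB0_D3 : ∀ x ∈ SB 0, D₃ x = 0 := by
    rintro x ⟨i, j, hj, rfl⟩
    obtain rfl : j = 0 := by omega
    rw [genM_comm]; exact D_genM_a0 D₃ ha₃ i
  have hSA_D1 : ∀ r : ℕ, ∀ x ∈ SA r, D₁ x = 0 := by
    rintro r x ⟨i, hi, j, rfl⟩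
    exact D_genM_const D₁ ha₁ hb₁ i j
  have hSA_br : ∀ r : ℕ, ∀ x ∈ SA r, (⁅D₂, D₃⁆ : Derivation K R R) x = 0 := by
    rintro r x ⟨i, hi, j, rfl⟩
    have e3 : ∀ i' j', D₃ (genM a b i' (j'+1)) = genM a b i' j' := by
      intro i' j'
      rw [genM_comm a b, genM_comm a b i' j']
      exact D_genM_a D₃ hb₃ ha₃ j' i'
    have e30 : ∀ i', D₃ (genM a b i' 0) = 0 := by
      intro i'; rw [genM_comm]; exact D_genM_a0 D₃ ha₃ i'
    rw [Derivation.commutator_apply]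
    cases i with
    | zero =>
        cases j with
        | zero => rw [e30, D_genM_a0 D₂ hb₂, map_zero, map_zero, sub_zero]
        | succ j' => rw [e3, D_genM_a0 D₂ hb₂, D_genM_a0 D₂ hb₂, map_zero, sub_zero]
    | succ i' =>
        cases j with
        | zero => rw [e30, D_genM_a D₂ ha₂ hb₂, e30, map_zero, sub_zero]
        | succ j' => rw [e3, D_genM_a D₂ ha₂ hb₂, D_genM_a D₂ ha₂ hb₂, e3, sub_self]
  -- span level facts
  have spanA_D2pow : ∀ r : ℕ, ∀ x ∈ Submodule.span F (SA r), D₂^[r+1] x = 0 := by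
    intro r
    induction r with
    | zero =>
        intro x hx
        have h0 := key D₂ hF2 (SA 0) ⊥
          (fun x hx => by rw [hSA0_D2 x hx]; exact Submodule.zero_mem ⊥) x hx
        simpa using h0
    | succ r ih =>
        intro x hx
        rw [Function.iterate_succ_apply]
        exact ih _ (key D₂ hF2 (SA (r+1)) (Submodule.span F (SA r)) (hSA_D2 r) x hx)
  have spanB_D3pow : ∀ s : ℕ, ∀ x ∈ Submodule.span F (SB s), D₃^[s+1] x = 0 := by
    intro s
    induction s with
    | zero =>
        intro x hx
        have h0 := key D₃ hF3 (SB 0) ⊥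
          (fun x hx => by rw [hSB0_D3 x hx]; exact Submodule.zero_mem ⊥) x hx
        simpa using h0
    | succ s ih =>
        intro x hx
        rw [Function.iterate_succ_apply]
        exact ih _ (key D₃ hF3 (SB (s+1)) (Submodule.span F (SB s)) (hSB_D3 s) x hx)
  have spanA_D3 : ∀ x ∈ Submodule.span F (SA m), D₃ x ∈ Submodule.span F (SA m) :=
    key D₃ hF3 (SA m) _ (fun x hx => hSA_D3 m x hx)
  have spanA_D2self : ∀ x ∈ Submodule.span F (SA m), D₂ x ∈ Submodule.span F (SA m) := by
    have hgen : ∀ x ∈ SA m, D₂ x ∈ Submodule.span F (SA m) := by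
      rintro x ⟨i, hi, j, rfl⟩
      cases i with
      | zero => rw [D_genM_a0 D₂ hb₂]; exact Submodule.zero_mem _
      | succ i' =>
          rw [D_genM_a D₂ ha₂ hb₂]
          exact Submodule.subset_span ⟨i', by omega, j, rfl⟩
    exact key D₂ hF2 (SA m) _ hgen
  have spanA_br0 : ∀ x ∈ Submodule.span F (SA m), (⁅D₂, D₃⁆ : Derivation K R R) x = 0 := by
    intro x hx
    have h0 := key (⁅D₂, D₃⁆) hFbr (SA m) ⊥
      (fun x hx => by rw [hSA_br m x hx]; exact Submodule.zero_mem ⊥) x hx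
    simpa using h0
  have spanA_D1 : ∀ x ∈ Submodule.span F (SA m), D₁ x = 0 := by
    intro x hx
    have h0 := key D₁ hF1 (SA m) ⊥
      (fun x hx => by rw [hSA_D1 m x hx]; exact Submodule.zero_mem ⊥) x hx
    simpa using h0
  -- memberships of derivatives of c
  have hc₂A : D₂ c ∈ Submodule.span F (SA (m-1)) := by
    refine Submodule.span_mono ?_ hc₂
    rintro x ⟨i, hi, j, hj, rfl⟩
    exact ⟨i, hi, j, rfl⟩
  have hc₂Am : D₂ c ∈ Submodule.span F (SA m) := by
    refine Submodule.span_mono ?_ hc₂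
    rintro x ⟨i, hi, j, hj, rfl⟩
    exact ⟨i, by omega, j, rfl⟩
  have hc₃A : D₃ c ∈ Submodule.span F (SA m) := by
    refine Submodule.span_mono ?_ hc₃
    rintro x ⟨i, hi, j, hj, rfl⟩
    exact ⟨i, hi, j, rfl⟩
  have hc₃B : D₃ c ∈ Submodule.span F (SB (k-1)) := by
    refine Submodule.span_mono ?_ hc₃
    rintro x ⟨i, hi, j, hj, rfl⟩
    exact ⟨i, j, hj, rfl⟩
  -- membership of mixed iterated derivatives
  have hdq_mem : ∀ q : ℕ, 1 ≤ q → D₃^[q] c ∈ Submodule.span F (SA m) := by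
    intro q hq
    obtain ⟨q', rfl⟩ : ∃ q', q = q' + 1 := ⟨q - 1, by omega⟩
    rw [Function.iterate_succ_apply]
    clear hq
    induction q' with
    | zero => simpa using hc₃A
    | succ q' ih =>
        rw [Function.iterate_succ_apply']
        exact spanA_D3 _ ih
  have hd_mem : ∀ p q : ℕ, ¬(p = 0 ∧ q = 0) →
      D₂^[p] (D₃^[q] c) ∈ Submodule.span F (SA m) := by
    intro p
    induction p with
    | zero =>
        intro q hq
        simpa using hdq_mem q (by omega)
    | succ p ih =>
        intro q _
        rw [Function.iterate_succ_apply']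
        by_cases hp0 : p = 0 ∧ q = 0
        · obtain ⟨rfl, rfl⟩ := hp0
          simpa using hc₂Am
        · exact spanA_D2self _ (ih q hp0)
  -- vanishing of high iterated derivatives
  have hV1 : ∀ q : ℕ, k < q → D₃^[q] c = 0 := by
    intro q hq
    obtain ⟨e, rfl⟩ : ∃ e, q = e + (k+1) := ⟨q - (k+1), by omega⟩
    rw [Function.iterate_add_apply]
    have h1 : D₃^[k+1] c = 0 := by
      have h2 : D₃^[(k-1)+1] (D₃ c) = 0 := spanB_D3pow (k-1) _ hc₃B
      have hk' : (k-1)+1 = k := by omega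
      rw [hk'] at h2
      rw [Function.iterate_succ_apply]
      exact h2
    rw [h1, iterD_zero]
  have hV2 : ∀ p q : ℕ, m < p → D₂^[p] (D₃^[q] c) = 0 := by
    intro p q hp
    obtain ⟨e, rfl⟩ : ∃ e, p = e + (m+1) := ⟨p - (m+1), by omega⟩
    rw [Function.iterate_add_apply]
    have h1 : D₂^[m+1] (D₃^[q] c) = 0 := by
      cases q with
      | zero =>
          have h2 : D₂^[(m-1)+1] (D₂ c) = 0 := spanA_D2pow (m-1) _ hc₂A
          have hm' : (m-1)+1 = m := by omega
          rw [hm'] at h2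
          rw [Function.iterate_succ_apply]
          exact h2
      | succ q' => exact spanA_D2pow m _ (hdq_mem (q'+1) (by omega))
    rw [h1, iterD_zero]
  -- commutator and D₁ kill the iterated derivatives
  have hbrd : ∀ p q : ℕ, (⁅D₂, D₃⁆ : Derivation K R R) (D₂^[p] (D₃^[q] c)) = 0 := by
    intro p q
    by_cases h : p = 0 ∧ q = 0
    · obtain ⟨rfl, rfl⟩ := h
      simpa using hc₂₃
    · exact spanA_br0 _ (hd_mem p q h)
  have hD1d : ∀ p q : ℕ, D₁ (D₂^[p] (D₃^[q] c)) = 0 := by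
    intro p q
    by_cases h : p = 0 ∧ q = 0
    · obtain ⟨rfl, rfl⟩ := h
      simpa using hc₁
    · exact spanA_D1 _ (hd_mem p q h)
  -- commutation
  have hcomm : ∀ p q : ℕ, D₃ (D₂^[p] (D₃^[q] c)) = D₂^[p] (D₃^[q+1] c) := by
    intro p
    induction p with
    | zero =>
        intro q
        simp [Function.iterate_succ_apply']
    | succ p ih =>
        intro q
        rw [Function.iterate_succ_apply', Function.iterate_succ_apply']
        have hb0 := hbrd p q
        rw [Derivation.commutator_apply] at hb0
        have h3 : D₃ (D₂ (D₂^[p] (D₃^[q] c))) = D₂ (D₃ (D₂^[p] (D₃^[q] c))) :=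
          (sub_eq_zero.mp hb0).symm
        rw [h3, ih q]
  -- Taylor expansion in b
  set h : ℕ → R := fun j =>
    ∑ t ∈ Finset.range (k+1), (-1:R)^t * (b^t / (Nat.factorial t : R)) * D₃^[j+t] c with hh
  have Hc : c = ∑ j ∈ Finset.range (k+1), (b^j / (Nat.factorial j : R)) * h j := by
    simp only [hh]
    exact (taylor_eq b k (fun q => D₃^[q] c) (fun p hp => hV1 p hp)).symm
  have Hiter : ∀ j p : ℕ, D₂^[p] (h j) =
      ∑ t ∈ Finset.range (k+1), (-1:R)^t * (b^t / (Nat.factorial t : R)) *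
        D₂^[p] (D₃^[j+t] c) := by
    intro j p
    induction p with
    | zero => simp [hh]
    | succ p ih =>
        rw [Function.iterate_succ_apply', ih, map_sum]
        refine Finset.sum_congr rfl fun t _ => ?_
        have hw : D₂ ((-1:R)^t * (b^t / (Nat.factorial t : R))) = 0 := by
          rw [Derivation.leibniz, D_pow_fact_const D₂ hb₂, D_neg_one_pow]
          simp
        rw [D_const_mul D₂ hw, ← Function.iterate_succ_apply' (⇑D₂) p (D₃^[j+t] c)]
  have Hvan : ∀ j p : ℕ, m < p → D₂^[p] (h j) = 0 := by
    intro j p hp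
    rw [Hiter]
    refine Finset.sum_eq_zero fun t _ => ?_
    rw [hV2 p (j+t) hp, mul_zero]
  -- Taylor expansion in a
  set g : ℕ → ℕ → R := fun i j =>
    ∑ s ∈ Finset.range (m+1), (-1:R)^s * (a^s / (Nat.factorial s : R)) * D₂^[i+s] (h j)
    with hg
  have Hhj : ∀ j : ℕ, h j = ∑ i ∈ Finset.range (m+1), (a^i / (Nat.factorial i : R)) * g i j := by
    intro j
    simp only [hg]
    exact (taylor_eq a m (fun p => D₂^[p] (h j)) (fun p hp => Hvan j p hp)).symm
  -- coefficients are constants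
  have hg2 : ∀ i j, D₂ (g i j) = 0 := by
    intro i j
    simp only [hg]
    refine tele D₂ ha₂ m (fun s => D₂^[i+s] (h j)) (fun p _ => ?_) (Hvan j (i+(m+1)) (by omega))
    exact (Function.iterate_succ_apply' D₂ (i+p) (h j)).symm
  have hDh : ∀ j p : ℕ, D₃ (D₂^[p] (h j)) = 0 := by
    intro j p
    rw [Hiter]
    refine tele D₃ hb₃ k (fun t => D₂^[p] (D₃^[j+t] c)) (fun t _ => hcomm p (j+t)) ?_
    show D₂^[p] (D₃^[j+(k+1)] c) = 0
    rw [hV1 (j+(k+1)) (by omega), iterD_zero]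
  have hg3 : ∀ i j, D₃ (g i j) = 0 := by
    intro i j
    simp only [hg]
    rw [map_sum]
    refine Finset.sum_eq_zero fun s _ => ?_
    have hw : D₃ ((-1:R)^s * (a^s / (Nat.factorial s : R))) = 0 := by
      rw [Derivation.leibniz, D_pow_fact_const D₃ ha₃, D_neg_one_pow]
      simp
    rw [D_const_mul D₃ hw, hDh, mul_zero]
  have hg1 : ∀ i j, D₁ (g i j) = 0 := by
    intro i j
    simp only [hg]
    rw [map_sum]
    refine Finset.sum_eq_zero fun s _ => ?_
    have hw : D₁ ((-1:R)^s * (a^s / (Nat.factorial s : R))) = 0 := by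
      rw [Derivation.leibniz, D_pow_fact_const D₁ ha₁, D_neg_one_pow]
      simp
    rw [D_const_mul D₁ hw]
    have hz : D₁ (D₂^[i+s] (h j)) = 0 := by
      rw [Hiter, map_sum]
      refine Finset.sum_eq_zero fun t _ => ?_
      have hw' : D₁ ((-1:R)^t * (b^t / (Nat.factorial t : R))) = 0 := by
        rw [Derivation.leibniz, D_pow_fact_const D₁ hb₁, D_neg_one_pow]
        simp
      rw [D_const_mul D₁ hw', hD1d, mul_zero]
    rw [hz, mul_zero]
  have hgF : ∀ i j, g i j ∈ F := by
    intro i j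
    rw [hF]
    show ∀ D ∈ ({D₁, D₂, D₃} : Set (Derivation K R R)), D (g i j) = 0
    intro D hD
    simp only [Set.mem_insert_iff, Set.mem_singleton_iff] at hD
    rcases hD with rfl | rfl | rfl
    exacts [hg1 i j, hg2 i j, hg3 i j]
  -- conclusion
  have Hc2 : c = ∑ j ∈ Finset.range (k+1), (b^j / (Nat.factorial j : R)) *
      (∑ i ∈ Finset.range (m+1), (a^i / (Nat.factorial i : R)) * g i j) :=
    Hc.trans (Finset.sum_congr rfl fun j _ => by rw [← Hhj j])
  rw [Hc2]
  refine Submodule.sum_mem _ fun j hj => ?_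
  rw [Finset.mul_sum]
  refine Submodule.sum_mem _ fun i hi => ?_
  have hi' : i ≤ m := Nat.lt_succ_iff.mp (Finset.mem_range.mp hi)
  have hj' : j ≤ k := Nat.lt_succ_iff.mp (Finset.mem_range.mp hj)
  have hmem : (a^i * b^j / ((Nat.factorial i : R) * (Nat.factorial j : R))) ∈
      {x : R | ∃ i ≤ m, ∃ j ≤ k,
        x = a ^ i * b ^ j / ((Nat.factorial i : R) * (Nat.factorial j : R))} :=
    ⟨i, hi', j, hj', rfl⟩
  have heq : (b^j / (Nat.factorial j : R)) * ((a^i / (Nat.factorial i : R)) * g i j) =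
      (⟨g i j, hgF i j⟩ : F) •
        (a^i * b^j / ((Nat.factorial i : R) * (Nat.factorial j : R))) := by
    show _ = g i j * _
    simp only [div_eq_mul_inv, mul_inv]
    ring
  rw [heq]
  exact Submodule.smul_mem _ _ (Submodule.subset_span hmem)
end
end

section
/- Let L be a nilpotent Lie subalgebra of W(A) with rk_R(L) = 3 and F = R^L its field of constants. If the center Z(L) of L satisfies rk_R(Z(L)) = 2 and dim_F(FL) ≥ 4, then there exist D₁, D₂, D₃ ∈ L, an element a ∈ R, and an integer n ≥ 1 such that [Dᵢ, Dⱼ] = 0 for all i, j ∈ {1,2,3}, D₁(a) = D₂(a) = 0, D₃(a) = 1, and FL is contained in the subalgebra of W(A) spanned over F by {D₃} ∪ {aⁱ/i!·D₁ : 0 ≤ i ≤ n} ∪ {aⁱ/i!·D₂ : 0 ≤ i ≤ n}. -/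
section helpers
variable {K R : Type*} [CommRing K] [CommRing R] [Algebra K R]

private lemma lie_smul_right'' (X Y : Derivation K R R) (r : R) :
    ⁅X, r • Y⁆ = X r • Y + r • ⁅X, Y⁆ := by
  ext x
  simp only [Derivation.commutator_apply, Derivation.smul_apply, Derivation.add_apply,
    smul_eq_mul, Derivation.leibniz]
  ring

private lemma lie_smul_left'' (X Y : Derivation K R R) (r : R) :
    ⁅r • X, Y⁆ = r • ⁅X, Y⁆ - Y r • X := by
  ext x
  simp only [Derivation.commutator_apply, Derivation.smul_apply, Derivation.sub_apply,
    smul_eq_mul, Derivation.leibniz]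
  ring

private lemma bracket_comb (D₁ D₂ T : Derivation K R R) (a b c a' b' c' : R)
    (h12 : ⁅D₁, D₂⁆ = 0) (h1T : ⁅D₁, T⁆ = 0) (h2T : ⁅D₂, T⁆ = 0) :
    ⁅a' • D₁ + b' • D₂ + c' • T, a • D₁ + b • D₂ + c • T⁆ =
      ((a' • D₁ + b' • D₂ + c' • T) a - (a • D₁ + b • D₂ + c • T) a') • D₁ +
      ((a' • D₁ + b' • D₂ + c' • T) b - (a • D₁ + b • D₂ + c • T) b') • D₂ +
      ((a' • D₁ + b' • D₂ + c' • T) c - (a • D₁ + b • D₂ + c • T) c') • T := by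
  have h21 : ⁅D₂, D₁⁆ = 0 := by rw [← lie_skew, h12, neg_zero]
  have hT1 : ⁅T, D₁⁆ = 0 := by rw [← lie_skew, h1T, neg_zero]
  have hT2 : ⁅T, D₂⁆ = 0 := by rw [← lie_skew, h2T, neg_zero]
  simp only [add_lie, lie_add, lie_smul_right'', lie_smul_left'', h12, h21, h1T, hT1, h2T, hT2,
    lie_self, smul_zero, add_zero, zero_add, Derivation.add_apply, Derivation.smul_apply,
    smul_eq_mul, sub_zero, zero_sub, smul_sub, smul_add, smul_neg, smul_smul]
  module
end helpers


noncomputable section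

set_option maxHeartbeats 1600000 in
set_option synthInstance.maxHeartbeats 400000 in
/-- Let `L` be a nilpotent Lie subalgebra of `W(A)` with `rk_R(L) = 3` and
`F = R^L` its field of constants.  If `rk_R(Z(L)) = 2` and `dim_F(FL) ≥ 4`, then there exist
`D₁, D₂, D₃ ∈ L`, `a ∈ R` and `n ≥ 1` with `[Dᵢ, Dⱼ] = 0`, `D₁(a) = D₂(a) = 0`, `D₃(a) = 1`,
such that `FL` is contained in the `F`-span of
`{D₃} ∪ {aⁱ/i!·D₁ : 0 ≤ i ≤ n} ∪ {aⁱ/i!·D₂ : 0 ≤ i ≤ n}`. -/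
theorem statement10
    (K A R : Type*) [Field K] [CharZero K] [CommRing A] [IsDomain A] [Algebra K A]
    [Field R] [Algebra A R] [IsFractionRing A R] [Algebra K R] [IsScalarTower K A R]
    (L : LieSubalgebra K (Derivation K R R))
    (hLW : (L : Set (Derivation K R R)) ⊆ (wAlg K A R : Set (Derivation K R R)))
    (hnil : LieRing.IsNilpotent L)
    (hrk : Module.rank R (Submodule.span R (L : Set (Derivation K R R))) = 3)
    (F : Subfield R) (hF : F = derivConstants K R (L : Set (Derivation K R R)))
    (hZ : Module.rank R (Submodule.span R
      {x : Derivation K R R | x ∈ L ∧ ∀ y ∈ L, ⁅x, y⁆ = 0}) = 2)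
    (hdim : 4 ≤ Module.rank F (Submodule.span F (L : Set (Derivation K R R)))) :
    ∃ D₁ ∈ L, ∃ D₂ ∈ L, ∃ D₃ ∈ L, ∃ a : R, ∃ n : ℕ, 1 ≤ n ∧
      ⁅D₁, D₂⁆ = 0 ∧ ⁅D₁, D₃⁆ = 0 ∧ ⁅D₂, D₃⁆ = 0 ∧
      D₁ a = 0 ∧ D₂ a = 0 ∧ D₃ a = 1 ∧
      Submodule.span F (L : Set (Derivation K R R)) ≤
        Submodule.span F
          {x : Derivation K R R | x = D₃ ∨
            (∃ i ≤ n, x = (a ^ i / (Nat.factorial i : R)) • D₁) ∨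
            (∃ i ≤ n, x = (a ^ i / (Nat.factorial i : R)) • D₂)} := by
  classical
  haveI := hnil
  haveI : CharZero R := charZero_of_injective_algebraMap (algebraMap K R).injective
  obtain ⟨bZ, hbZsub, hbZspan, hbZind⟩ :=
    exists_linearIndependent R {x : Derivation K R R | x ∈ L ∧ ∀ y ∈ L, ⁅x, y⁆ = 0}
  have hbZcard : Cardinal.mk bZ = 2 := by
    have h := rank_span_set hbZind
    rw [hbZspan, hZ] at h; exact h.symm
  obtain ⟨x, y, hxy, -⟩ := Cardinal.mk_eq_two_iff.mp hbZcard
  set D₁ : Derivation K R R := x.1 with hD₁def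
  set D₂ : Derivation K R R := y.1 with hD₂def
  have hD₁Z := hbZsub x.2
  have hD₂Z := hbZsub y.2
  have hD₁L : D₁ ∈ L := hD₁Z.1
  have hD₂L : D₂ ∈ L := hD₂Z.1
  have hc1 : ∀ y' ∈ L, ⁅D₁, y'⁆ = 0 := hD₁Z.2
  have hc2 : ∀ y' ∈ L, ⁅D₂, y'⁆ = 0 := hD₂Z.2
  have hD12ne : D₁ ≠ D₂ := fun h => hxy (Subtype.ext h)
  have hpairsub : ({D₁, D₂} : Set (Derivation K R R)) ⊆ bZ := by
    rintro z (rfl | rfl)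
    · exact x.2
    · exact y.2
  have hpairind : LinearIndependent R ((↑) : ({D₁, D₂} : Set (Derivation K R R)) → Derivation K R R) :=
    (linearIndependent_subtype_iff.mp hbZind).mono hpairsub
  have hD₂ne0 : D₂ ≠ 0 := hbZind.ne_zero y
  have hD1notin : D₁ ∉ Submodule.span R ({D₂} : Set (Derivation K R R)) :=
    ((linearIndepOn_id_insert (by simpa using hD12ne)).mp hpairind).2
  have hpair : ∀ a b : R, a • D₁ + b • D₂ = 0 → a = 0 ∧ b = 0 := by
    intro a b h
    by_cases ha : a = 0
    · subst ha; rw [zero_smul, zero_add] at h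
      rcases smul_eq_zero.mp h with hb | hD
      · exact ⟨rfl, hb⟩
      · exact absurd hD hD₂ne0
    · exfalso; apply hD1notin
      have h1 : a⁻¹ • (a • D₁ + b • D₂) = a⁻¹ • (0 : Derivation K R R) := by rw [h]
      rw [smul_add, smul_smul, smul_smul, inv_mul_cancel₀ ha, one_smul, smul_zero] at h1
      have h2 := add_eq_zero_iff_eq_neg.mp h1
      rw [h2, ← neg_smul]
      exact Submodule.smul_mem _ _ (Submodule.mem_span_singleton_self _)
  have hTex : ∃ T, T ∈ L ∧ T ∉ Submodule.span R ({D₁, D₂} : Set (Derivation K R R)) := by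
    by_contra hcon
    push_neg at hcon
    have hle : Submodule.span R (L : Set (Derivation K R R)) ≤
        Submodule.span R ({D₁, D₂} : Set (Derivation K R R)) :=
      Submodule.span_le.mpr fun z hz => hcon z hz
    have h1 : (3 : Cardinal) ≤ 2 := by
      calc (3 : Cardinal) = Module.rank R (Submodule.span R (L : Set (Derivation K R R))) :=
            hrk.symm
        _ ≤ Module.rank R (Submodule.span R ({D₁, D₂} : Set (Derivation K R R))) :=
            Submodule.rank_mono hle
        _ ≤ Cardinal.mk ({D₁, D₂} : Set (Derivation K R R)) := rank_span_le _
        _ ≤ 2 := by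
            refine le_trans (Cardinal.mk_insert_le) ?_
            rw [Cardinal.mk_singleton]
            norm_num
    norm_num at h1
  obtain ⟨T, hTL, hTnot⟩ := hTex
  have h12 : ⁅D₁, D₂⁆ = 0 := hc1 D₂ hD₂L
  have h1T : ⁅D₁, T⁆ = 0 := hc1 T hTL
  have h2T : ⁅D₂, T⁆ = 0 := hc2 T hTL
  have huniq : ∀ a b c : R, a • D₁ + b • D₂ + c • T = 0 → a = 0 ∧ b = 0 ∧ c = 0 := by
    intro a b c h
    have hc : c = 0 := by
      by_contra hc
      apply hTnot
      rw [Submodule.mem_span_pair]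
      refine ⟨-(c⁻¹ * a), -(c⁻¹ * b), ?_⟩
      have h1 : (-c⁻¹) • (a • D₁ + b • D₂ + c • T) = (-c⁻¹) • (0 : Derivation K R R) := by
        rw [h]
      rw [smul_zero, smul_add, smul_add, smul_smul, smul_smul, smul_smul] at h1
      have hcc : -c⁻¹ * c = -1 := by field_simp
      rw [hcc] at h1
      have h2 := add_eq_zero_iff_eq_neg.mp h1
      rw [neg_smul, one_smul, neg_neg] at h2
      simpa [neg_mul] using h2
    rw [hc, zero_smul, add_zero] at h
    obtain ⟨ha, hb⟩ := hpair a b h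
    exact ⟨ha, hb, hc⟩
  have hTne1 : T ≠ D₁ := fun h => hTnot (h ▸ Submodule.subset_span (by simp))
  have hTne2 : T ≠ D₂ := fun h => hTnot (h ▸ Submodule.subset_span (by simp))
  have hTnotpair : T ∉ ({D₁, D₂} : Set (Derivation K R R)) := by
    simp [hTne1, hTne2]
  have hind3 : LinearIndependent R ((↑) : (insert T {D₁, D₂} : Set (Derivation K R R)) →
      Derivation K R R) := LinearIndepOn.id_insert hpairind hTnot
  have hcard3 : Cardinal.mk (insert T {D₁, D₂} : Set (Derivation K R R)) = 3 := by
    rw [Cardinal.mk_insert hTnotpair, Cardinal.mk_insert (by simpa using hD12ne),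
      Cardinal.mk_singleton]
    norm_num
  haveI hfinL : Module.Finite R (Submodule.span R (L : Set (Derivation K R R))) :=
    Module.finite_of_rank_eq_nat (n := 3) (by rw [hrk]; norm_num)
  have hrank3' : Module.rank R (Submodule.span R (insert T {D₁, D₂} :
      Set (Derivation K R R))) = 3 := by rw [rank_span_set hind3, hcard3]
  have hle3 : Submodule.span R (insert T {D₁, D₂} : Set (Derivation K R R)) ≤
      Submodule.span R (L : Set (Derivation K R R)) := by
    apply Submodule.span_le.mpr
    rintro z (rfl | rfl | rfl)
    · exact Submodule.subset_span hTL
    · exact Submodule.subset_span hD₁L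
    · exact Submodule.subset_span hD₂L
  have heq3 : Submodule.span R (insert T {D₁, D₂} : Set (Derivation K R R)) =
      Submodule.span R (L : Set (Derivation K R R)) := by
    apply Submodule.eq_of_le_of_finrank_le hle3
    have e1 : Module.finrank R (Submodule.span R (L : Set (Derivation K R R))) = 3 :=
      Module.finrank_eq_of_rank_eq (by rw [hrk]; norm_num)
    have e2 : Module.finrank R (Submodule.span R (insert T {D₁, D₂} :
        Set (Derivation K R R))) = 3 :=
      Module.finrank_eq_of_rank_eq (by rw [hrank3']; norm_num)
    rw [e1, e2]
  have hdecomp : ∀ D, D ∈ L → ∃ a b c : R, D = a • D₁ + b • D₂ + c • T := by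
    intro D hD
    have hmem : D ∈ Submodule.span R (insert T {D₁, D₂} : Set (Derivation K R R)) := by
      rw [heq3]; exact Submodule.subset_span hD
    obtain ⟨cT, z, hz, hDz⟩ := Submodule.mem_span_insert.mp hmem
    obtain ⟨aa, bb, hab⟩ := Submodule.mem_span_pair.mp hz
    refine ⟨aa, bb, cT, ?_⟩
    rw [hDz, ← hab]; abel
  have hbr : ∀ a b c a' b' c' : R,
      ⁅a' • D₁ + b' • D₂ + c' • T, a • D₁ + b • D₂ + c • T⁆ =
        ((a' * D₁ a + b' * D₂ a + c' * T a) - (a * D₁ a' + b * D₂ a' + c * T a')) • D₁ +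
        ((a' * D₁ b + b' * D₂ b + c' * T b) - (a * D₁ b' + b * D₂ b' + c * T b')) • D₂ +
        ((a' * D₁ c + b' * D₂ c + c' * T c) - (a * D₁ c' + b * D₂ c' + c * T c')) • T := by
    intro a b c a' b' c'
    rw [bracket_comb D₁ D₂ T a b c a' b' c' h12 h1T h2T]
    simp only [Derivation.add_apply, Derivation.smul_apply, smul_eq_mul]
  have hkill : ∀ a b c : R, (a • D₁ + b • D₂ + c • T) ∈ L →
      (D₁ a = 0 ∧ D₁ b = 0 ∧ D₁ c = 0) ∧ (D₂ a = 0 ∧ D₂ b = 0 ∧ D₂ c = 0) := by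
    intro a b c hD
    constructor
    · have h0 := hbr a b c 1 0 0
      simp only [one_smul, zero_smul, add_zero, zero_add, one_mul, zero_mul, mul_zero,
        Derivation.map_one_eq_zero, map_zero, sub_zero] at h0
      rw [hc1 _ hD] at h0
      obtain ⟨e1, e2, e3⟩ := huniq _ _ _ h0.symm
      exact ⟨e1, e2, e3⟩
    · have h0 := hbr a b c 0 1 0
      simp only [one_smul, zero_smul, add_zero, zero_add, one_mul, zero_mul, mul_zero,
        Derivation.map_one_eq_zero, map_zero, sub_zero] at h0
      rw [hc2 _ hD] at h0
      obtain ⟨e1, e2, e3⟩ := huniq _ _ _ h0.symm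
      exact ⟨e1, e2, e3⟩
  have hFiff : ∀ r : R, r ∈ F ↔ ∀ D ∈ L, D r = 0 := by
    intro r; rw [hF]; exact Iff.rfl
  have hFin : ∀ r : R, D₁ r = 0 → D₂ r = 0 → T r = 0 → r ∈ F := by
    intro r h1 h2 h3
    rw [hFiff]
    intro D hD
    obtain ⟨a, b, c, hD'⟩ := hdecomp D hD
    rw [hD']
    simp [Derivation.add_apply, Derivation.smul_apply, h1, h2, h3]
  have hFout : ∀ r : R, r ∈ F → ∀ D ∈ L, D r = 0 := fun r hr => (hFiff r).mp hr
  obtain ⟨k, hk⟩ := LieModule.exists_forall_pow_toEnd_eq_zero K L L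
  have hmem_iter : ∀ X, X ∈ L → ∀ Y, Y ∈ L → ∀ j,
      (fun Z : Derivation K R R => ⁅X, Z⁆)^[j] Y ∈ L := by
    intro X hX Y hY j
    induction j with
    | zero => simpa
    | succ j ih => rw [Function.iterate_succ_apply']; exact L.lie_mem hX ih
  have hnil_iter : ∀ X, X ∈ L → ∀ Y, Y ∈ L →
      (fun Z : Derivation K R R => ⁅X, Z⁆)^[k] Y = 0 := by
    intro X hX Y hY
    have h1 : ∀ j, (((LieModule.toEnd K (↥L) (↥L) ⟨X, hX⟩)^[j] ⟨Y, hY⟩ : L) : Derivation K R R)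
        = (fun Z : Derivation K R R => ⁅X, Z⁆)^[j] Y := by
      intro j
      induction j with
      | zero => rfl
      | succ j ih =>
        rw [Function.iterate_succ_apply', Function.iterate_succ_apply',
          LieModule.toEnd_apply_apply, ← ih]
        rfl
    have h3 : ((LieModule.toEnd K (↥L) (↥L) ⟨X, hX⟩)^[k] ⟨Y, hY⟩ : L) = 0 := by
      rw [← Module.End.pow_apply, hk ⟨X, hX⟩]; rfl
    rw [← h1 k, h3]; rfl
  have hcomm1T : ∀ r : R, D₁ (T r) = T (D₁ r) := by
    intro r
    have h := congrArg (fun D : Derivation K R R => D r) h1T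
    simpa [Derivation.commutator_apply, sub_eq_zero] using h
  have hcomm2T : ∀ r : R, D₂ (T r) = T (D₂ r) := by
    intro r
    have h := congrArg (fun D : Derivation K R R => D r) h2T
    simpa [Derivation.commutator_apply, sub_eq_zero] using h
  have hTiter : ∀ a b c : R, ∀ j, (fun Z : Derivation K R R => ⁅T, Z⁆)^[j]
      (a • D₁ + b • D₂ + c • T)
      = (⇑T)^[j] a • D₁ + (⇑T)^[j] b • D₂ + (⇑T)^[j] c • T := by
    intro a b c j
    induction j with
    | zero => simp
    | succ j ih =>
      rw [Function.iterate_succ_apply', ih]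
      have e := hbr ((⇑T)^[j] a) ((⇑T)^[j] b) ((⇑T)^[j] c) 0 0 1
      simp only [zero_smul, one_smul, zero_add, add_zero, zero_mul, one_mul, mul_zero,
        map_zero, Derivation.map_one_eq_zero, sub_zero] at e
      rw [e, Function.iterate_succ_apply', Function.iterate_succ_apply',
        Function.iterate_succ_apply']
  have hTk : ∀ a b c : R, (a • D₁ + b • D₂ + c • T) ∈ L →
      (⇑T)^[k] a = 0 ∧ (⇑T)^[k] b = 0 ∧ (⇑T)^[k] c = 0 := by
    intro a b c hD
    have h0 := hnil_iter T hTL _ hD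
    rw [hTiter] at h0
    exact huniq _ _ _ h0
  have hiterkill : ∀ r : R, D₁ r = 0 → D₂ r = 0 → ∀ j,
      D₁ ((⇑T)^[j] r) = 0 ∧ D₂ ((⇑T)^[j] r) = 0 := by
    intro r h1 h2 j
    induction j with
    | zero => exact ⟨h1, h2⟩
    | succ j ih =>
      rw [Function.iterate_succ_apply']
      exact ⟨by rw [hcomm1T, ih.1, map_zero], by rw [hcomm2T, ih.2, map_zero]⟩
  have hlam : ∀ a b c : R, (a • D₁ + b • D₂ + c • T) ∈ L → T c = 0 := by
    intro a b c hD
    by_contra hTc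
    obtain ⟨⟨hk1a, hk1b, hk1c⟩, ⟨hk2a, hk2b, hk2c⟩⟩ := hkill a b c hD
    have hex : ∃ j, (⇑T)^[j] c = 0 := ⟨k, (hTk a b c hD).2.2⟩
    set m := Nat.find hex with hmdef
    have hm : (⇑T)^[m] c = 0 := Nat.find_spec hex
    have hmin : ∀ j, j < m → (⇑T)^[j] c ≠ 0 := fun j hj => Nat.find_min hex hj
    have hc0 : c ≠ 0 := fun h => hTc (by rw [h, map_zero])
    have hm0 : m ≠ 0 := fun h => hc0 (by simpa [h] using hm)
    have hm1 : m ≠ 1 := fun h => hTc (by simpa [h] using hm)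
    have hD'mem : (fun Z : Derivation K R R => ⁅T, Z⁆)^[m-2] (a • D₁ + b • D₂ + c • T) ∈ L :=
      hmem_iter T hTL _ hD (m-2)
    rw [hTiter a b c (m-2)] at hD'mem
    set α0 := (⇑T)^[m-2] a with hα0def
    set β0 := (⇑T)^[m-2] b with hβ0def
    set q := (⇑T)^[m-2] c with hqdef
    have hfq : (⇑T)^[m-1] c = T q := by
      have hmm : m - 1 = (m-2) + 1 := by omega
      rw [hmm, Function.iterate_succ_apply']
    set f := T q with hfdef
    have hf0 : f ≠ 0 := fun h => hmin (m-1) (by omega) (by rw [hfq]; exact h)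
    have hTf : T f = 0 := by
      have h1 : T f = (⇑T)^[m] c := by
        have hmm : m = (m-1) + 1 := by omega
        rw [hmm, Function.iterate_succ_apply', hfq]
      rw [h1, hm]
    have hq1 : D₁ q = 0 := (hiterkill c hk1c hk2c (m-2)).1
    have hq2 : D₂ q = 0 := (hiterkill c hk1c hk2c (m-2)).2
    have hf1 : D₁ f = 0 := by
      have h' := (hiterkill c hk1c hk2c (m-1)).1
      rw [hfq] at h'; exact h'
    have hf2 : D₂ f = 0 := by
      have h' := (hiterkill c hk1c hk2c (m-1)).2
      rw [hfq] at h'; exact h'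
    have hE'L : (⁅T, α0 • D₁ + β0 • D₂ + q • T⁆ : Derivation K R R) ∈ L :=
      L.lie_mem hTL hD'mem
    have hE'eq : (⁅T, α0 • D₁ + β0 • D₂ + q • T⁆ : Derivation K R R)
        = (T α0) • D₁ + (T β0) • D₂ + f • T := by
      have e := hbr α0 β0 q 0 0 1
      simp only [zero_smul, one_smul, zero_add, add_zero, zero_mul, one_mul, mul_zero,
        map_zero, Derivation.map_one_eq_zero, sub_zero] at e
      rw [e, hfdef]
    have hseq : ∀ j : ℕ, ∃ α β g : R,
        (fun Z : Derivation K R R => ⁅α0 • D₁ + β0 • D₂ + q • T, Z⁆)^[j]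
          (⁅T, α0 • D₁ + β0 • D₂ + q • T⁆ : Derivation K R R)
          = α • D₁ + β • D₂ + g • T
        ∧ g ≠ 0 ∧ D₁ g = 0 ∧ D₂ g = 0 ∧ T g = 0 := by
      intro j
      induction j with
      | zero =>
        exact ⟨T α0, T β0, f, hE'eq, hf0, hf1, hf2, hTf⟩
      | succ j ih =>
        obtain ⟨α, β, g, hX, hg0, hg1, hg2, hg3⟩ := ih
        rw [Function.iterate_succ_apply', hX]
        have e := hbr α β g α0 β0 q
        rw [hg1, hg2, hg3, hq1, hq2] at e
        simp only [mul_zero, add_zero, zero_add, zero_sub] at e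
        refine ⟨_, _, -(g * T q), e, ?_, ?_, ?_, ?_⟩
        · simpa [neg_eq_zero] using mul_ne_zero hg0 (hfdef ▸ hf0)
        · rw [map_neg, Derivation.leibniz, hg1, ← hfdef, hf1]; simp
        · rw [map_neg, Derivation.leibniz, hg2, ← hfdef, hf2]; simp
        · rw [map_neg, Derivation.leibniz, hg3, ← hfdef, hTf]; simp
    obtain ⟨α, β, g, hX, hg0, -, -, -⟩ := hseq k
    rw [hnil_iter _ hD'mem _ hE'L] at hX
    exact hg0 (huniq _ _ _ hX.symm).2.2
  have hsmulmem : ∀ (p : Submodule F (Derivation K R R)) (v : R), v ∈ F →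
      ∀ X ∈ p, v • X ∈ p := by
    intro p v hv X hX
    have h := p.smul_mem (⟨v, hv⟩ : F) hX
    rwa [show ((⟨v, hv⟩ : F) • X : Derivation K R R) = v • X by ext u; rfl] at h
  have hsmulmemR : ∀ (p : Submodule F R) (v : R), v ∈ F → ∀ u ∈ p, v * u ∈ p := by
    intro p v hv u hu
    have h := p.smul_mem (⟨v, hv⟩ : F) hu
    rwa [show (⟨v, hv⟩ : F) • u = v * u from rfl] at h
  have hmakea : ∀ r : R, D₁ r = 0 → D₂ r = 0 → T r ≠ 0 → (∃ j, (⇑T)^[j] r = 0) →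
      ∃ a₀ : R, D₁ a₀ = 0 ∧ D₂ a₀ = 0 ∧ T a₀ = 1 := by
    intro r h1 h2 hTr hex
    set m := Nat.find hex with hmdef
    have hm : (⇑T)^[m] r = 0 := Nat.find_spec hex
    have hmin : ∀ j, j < m → (⇑T)^[j] r ≠ 0 := fun j hj => Nat.find_min hex hj
    have hr0 : r ≠ 0 := fun h => hTr (by rw [h, map_zero])
    have hm0 : m ≠ 0 := fun h => hr0 (by simpa [h] using hm)
    have hm1 : m ≠ 1 := fun h => hTr (by simpa [h] using hm)
    set q := (⇑T)^[m-2] r with hqdef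
    have hfq : (⇑T)^[m-1] r = T q := by
      have hmm : m - 1 = (m-2) + 1 := by omega
      rw [hmm, Function.iterate_succ_apply']
    have hf0 : T q ≠ 0 := fun h => hmin (m-1) (by omega) (by rw [hfq]; exact h)
    have hTf : T (T q) = 0 := by
      have hmm : m = (m-1) + 1 := by omega
      have h' := hm
      rw [hmm, Function.iterate_succ_apply', hfq] at h'
      exact h'
    have hq1 : D₁ q = 0 := (hiterkill r h1 h2 (m-2)).1
    have hq2 : D₂ q = 0 := (hiterkill r h1 h2 (m-2)).2
    have hf1 : D₁ (T q) = 0 := by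
      have h' := (hiterkill r h1 h2 (m-1)).1
      rw [hfq] at h'; exact h'
    have hf2 : D₂ (T q) = 0 := by
      have h' := (hiterkill r h1 h2 (m-1)).2
      rw [hfq] at h'; exact h'
    have hfF : (T q) ∈ F := hFin _ hf1 hf2 hTf
    have hinv : (T q)⁻¹ ∈ F := F.inv_mem hfF
    refine ⟨(T q)⁻¹ * q, ?_, ?_, ?_⟩
    · rw [Derivation.leibniz, hq1, hFout _ hinv D₁ hD₁L]
      simp
    · rw [Derivation.leibniz, hq2, hFout _ hinv D₂ hD₂L]
      simp
    · rw [Derivation.leibniz, hFout _ hinv T hTL]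
      simp [smul_eq_mul, inv_mul_cancel₀ hf0]
  by_cases hall : ∀ a b c : R, (a • D₁ + b • D₂ + c • T) ∈ L → T a = 0 ∧ T b = 0
  · exfalso
    have hle : Submodule.span F (L : Set (Derivation K R R)) ≤
        Submodule.span F (insert T {D₁, D₂} : Set (Derivation K R R)) := by
      apply Submodule.span_le.mpr
      intro D hD
      obtain ⟨a, b, c, hDe⟩ := hdecomp D hD
      have hDL : (a • D₁ + b • D₂ + c • T) ∈ L := hDe ▸ hD
      obtain ⟨⟨h1a, h1b, h1c⟩, ⟨h2a, h2b, h2c⟩⟩ := hkill a b c hDL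
      obtain ⟨hTa, hTb⟩ := hall a b c hDL
      have haF : a ∈ F := hFin a h1a h2a hTa
      have hbF : b ∈ F := hFin b h1b h2b hTb
      have hcF : c ∈ F := hFin c h1c h2c (hlam a b c hDL)
      rw [hDe]
      refine Submodule.add_mem _ (Submodule.add_mem _ ?_ ?_) ?_
      · exact hsmulmem _ a haF D₁ (Submodule.subset_span (by simp))
      · exact hsmulmem _ b hbF D₂ (Submodule.subset_span (by simp))
      · exact hsmulmem _ c hcF T (Submodule.subset_span (by simp))
    have h4 : (4 : Cardinal) ≤ 3 := by
      calc (4 : Cardinal) ≤ Module.rank F (Submodule.span F (L : Set (Derivation K R R))) := hdim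
        _ ≤ Module.rank F (Submodule.span F (insert T {D₁, D₂} : Set (Derivation K R R))) :=
            Submodule.rank_mono hle
        _ ≤ Cardinal.mk (insert T {D₁, D₂} : Set (Derivation K R R)) := rank_span_le _
        _ = 3 := hcard3
    norm_num at h4
  · push_neg at hall
    obtain ⟨a, b, c, hDL, hnab⟩ := hall
    have hexa₀ : ∃ a₀ : R, D₁ a₀ = 0 ∧ D₂ a₀ = 0 ∧ T a₀ = 1 := by
      obtain ⟨⟨h1a, h1b, h1c⟩, ⟨h2a, h2b, h2c⟩⟩ := hkill a b c hDL
      obtain ⟨hka, hkb, hkc⟩ := hTk a b c hDL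
      by_cases hTa : T a = 0
      · exact hmakea b h1b h2b (hnab hTa) ⟨k, hkb⟩
      · exact hmakea a h1a h2a hTa ⟨k, hka⟩
    obtain ⟨a₀, ha₀1, ha₀2, ha₀3⟩ := hexa₀
    set n := max k 1 with hndef
    have hdc : ∀ (D : Derivation K R R) (u : R) (i : ℕ),
        D (u / (Nat.factorial i : R)) = (Nat.factorial i : R)⁻¹ * D u := by
      intro D u i
      have h0 : D ((Nat.factorial i : R)) = 0 := Derivation.map_natCast D _
      rw [div_eq_mul_inv, Derivation.leibniz, Derivation.leibniz_inv, h0]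
      simp [smul_eq_mul, mul_comm]
    have hD₁pow : ∀ i : ℕ, D₁ (a₀ ^ i / (Nat.factorial i : R)) = 0 := by
      intro i
      rw [hdc, Derivation.leibniz_pow, ha₀1]
      simp
    have hD₂pow : ∀ i : ℕ, D₂ (a₀ ^ i / (Nat.factorial i : R)) = 0 := by
      intro i
      rw [hdc, Derivation.leibniz_pow, ha₀2]
      simp
    have hTn : ∀ i : ℕ, T (a₀ ^ (i+1) / (Nat.factorial (i+1) : R))
        = a₀ ^ i / (Nat.factorial i : R) := by
      intro i
      rw [hdc, Derivation.leibniz_pow, ha₀3]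
      simp only [smul_eq_mul, mul_one, Nat.add_sub_cancel, nsmul_eq_mul]
      have h2 : ((i : R) + 1) ≠ 0 := Nat.cast_add_one_ne_zero i
      have h3 : ((Nat.factorial i : R)) ≠ 0 := Nat.cast_ne_zero.mpr (Nat.factorial_ne_zero i)
      rw [Nat.factorial_succ]
      push_cast
      field_simp
    have hanti : ∀ s : ℕ, ∀ v ∈ Submodule.span F
        {x : R | ∃ i ≤ s, x = a₀^i / (Nat.factorial i : R)},
        ∃ w ∈ Submodule.span F {x : R | ∃ i ≤ s+1, x = a₀^i / (Nat.factorial i : R)},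
          T w = v ∧ D₁ w = 0 ∧ D₂ w = 0 := by
      intro s v hv
      induction hv using Submodule.span_induction with
      | mem x hx =>
        obtain ⟨i, his, rfl⟩ := hx
        exact ⟨a₀^(i+1) / (Nat.factorial (i+1) : R),
          Submodule.subset_span ⟨i+1, by omega, rfl⟩, hTn i, hD₁pow (i+1), hD₂pow (i+1)⟩
      | zero => exact ⟨0, Submodule.zero_mem _, map_zero _, map_zero _, map_zero _⟩
      | add x y hx hy ihx ihy =>
        obtain ⟨w1, hw1, e1, d1, d2⟩ := ihx
        obtain ⟨w2, hw2, e2, d3, d4⟩ := ihy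
        exact ⟨w1 + w2, Submodule.add_mem _ hw1 hw2, by rw [map_add, e1, e2],
          by rw [map_add, d1, d3, add_zero], by rw [map_add, d2, d4, add_zero]⟩
      | smul t x hx ihx =>
        obtain ⟨w, hw, e1, d1, d2⟩ := ihx
        refine ⟨t • w, Submodule.smul_mem _ t hw, ?_, ?_, ?_⟩
        · show T ((t : R) * w) = (t : R) * x
          rw [Derivation.leibniz, hFout _ t.2 T hTL, e1]
          simp [smul_eq_mul]
        · show D₁ ((t : R) * w) = 0
          rw [Derivation.leibniz, hFout _ t.2 D₁ hD₁L, d1]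
          simp
        · show D₂ ((t : R) * w) = 0
          rw [Derivation.leibniz, hFout _ t.2 D₂ hD₂L, d2]
          simp
    have hV : ∀ s : ℕ, ∀ r : R, D₁ r = 0 → D₂ r = 0 → (⇑T)^[s+1] r = 0 →
        r ∈ Submodule.span F {x : R | ∃ i ≤ s, x = a₀^i / (Nat.factorial i : R)} := by
      intro s
      induction s with
      | zero =>
        intro r h1 h2 h3
        have hrF : r ∈ F := hFin r h1 h2 (by simpa using h3)
        have h1mem : (1 : R) ∈ {x : R | ∃ i ≤ 0, x = a₀^i / (Nat.factorial i : R)} :=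
          ⟨0, le_refl 0, by simp⟩
        have h := hsmulmemR _ r hrF 1 (Submodule.subset_span h1mem)
        simpa using h
      | succ s ih =>
        intro r h1 h2 h3
        have hTr : (⇑T)^[s+1] (T r) = 0 := by
          rw [← Function.iterate_succ_apply]
          exact h3
        have hTrmem := ih (T r) (by rw [hcomm1T, h1, map_zero])
          (by rw [hcomm2T, h2, map_zero]) hTr
        obtain ⟨w, hw, e1, d1, d2⟩ := hanti s (T r) hTrmem
        have hdiff : r - w ∈ F := hFin _ (by rw [map_sub, h1, d1, sub_zero])
          (by rw [map_sub, h2, d2, sub_zero]) (by rw [map_sub, e1, sub_self])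
        have h1mem : (1 : R) ∈ {x : R | ∃ i ≤ s+1, x = a₀^i / (Nat.factorial i : R)} :=
          ⟨0, by omega, by simp⟩
        have hd := hsmulmemR _ (r - w) hdiff 1 (Submodule.subset_span h1mem)
        rw [mul_one] at hd
        have hrw : r = (r - w) + w := by ring
        rw [hrw]
        exact Submodule.add_mem _ hd hw
    refine ⟨D₁, hD₁L, D₂, hD₂L, T, hTL, a₀, n, le_max_right k 1, h12, h1T, h2T,
      ha₀1, ha₀2, ha₀3, ?_⟩
    apply Submodule.span_le.mpr
    intro D hD
    obtain ⟨av, bv, cv, hDe⟩ := hdecomp D hD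
    have hDL' : (av • D₁ + bv • D₂ + cv • T) ∈ L := hDe ▸ hD
    obtain ⟨⟨h1a, h1b, h1c⟩, ⟨h2a, h2b, h2c⟩⟩ := hkill av bv cv hDL'
    obtain ⟨hka, hkb, hkc⟩ := hTk av bv cv hDL'
    have hcF : cv ∈ F := hFin cv h1c h2c (hlam av bv cv hDL')
    have hiterzero : ∀ r : R, (⇑T)^[k] r = 0 → (⇑T)^[n+1] r = 0 := by
      intro r hr
      have hm : n + 1 = (n + 1 - k) + k := by
        have : k ≤ n := le_max_left k 1
        omega
      rw [hm, Function.iterate_add_apply, hr, Function.iterate_fixed (map_zero T)]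
    have haS := hV n av h1a h2a (hiterzero av hka)
    have hbS := hV n bv h1b h2b (hiterzero bv hkb)
    have hmul1 : ∀ v ∈ Submodule.span F {x : R | ∃ i ≤ n, x = a₀^i / (Nat.factorial i : R)},
        v • D₁ ∈ Submodule.span F
          {x : Derivation K R R | x = T ∨
            (∃ i ≤ n, x = (a₀ ^ i / (Nat.factorial i : R)) • D₁) ∨
            (∃ i ≤ n, x = (a₀ ^ i / (Nat.factorial i : R)) • D₂)} := by
      intro v hv
      induction hv using Submodule.span_induction with
      | mem x hx =>
        obtain ⟨i, hin, rfl⟩ := hx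
        exact Submodule.subset_span (Or.inr (Or.inl ⟨i, hin, rfl⟩))
      | zero => rw [zero_smul]; exact Submodule.zero_mem _
      | add x y hx hy ihx ihy => rw [add_smul]; exact Submodule.add_mem _ ihx ihy
      | smul t x hx ihx =>
        rw [smul_assoc]
        exact Submodule.smul_mem _ t ihx
    have hmul2 : ∀ v ∈ Submodule.span F {x : R | ∃ i ≤ n, x = a₀^i / (Nat.factorial i : R)},
        v • D₂ ∈ Submodule.span F
          {x : Derivation K R R | x = T ∨
            (∃ i ≤ n, x = (a₀ ^ i / (Nat.factorial i : R)) • D₁) ∨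
            (∃ i ≤ n, x = (a₀ ^ i / (Nat.factorial i : R)) • D₂)} := by
      intro v hv
      induction hv using Submodule.span_induction with
      | mem x hx =>
        obtain ⟨i, hin, rfl⟩ := hx
        exact Submodule.subset_span (Or.inr (Or.inr ⟨i, hin, rfl⟩))
      | zero => rw [zero_smul]; exact Submodule.zero_mem _
      | add x y hx hy ihx ihy => rw [add_smul]; exact Submodule.add_mem _ ihx ihy
      | smul t x hx ihx =>
        rw [smul_assoc]
        exact Submodule.smul_mem _ t ihx
    rw [hDe]
    refine Submodule.add_mem _ (Submodule.add_mem _ (hmul1 av haS) (hmul2 bv hbS)) ?_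
    exact hsmulmem _ cv hcF T (Submodule.subset_span (Or.inl rfl))
end
end
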